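/- arXiv:0807.2987 — 3 statements merged into one kernel-verified Lean document; each statement's English description precedes it below -/
import Mathlib

section
/- Let ℙ be a translation-invariant Borel probability measure on Ω and set Coex = {ω ∈ Ω : V(T_{(1,1)}^ω) is infinite}. Then ℙ(Coex) > 0 if and only if, with positive ℙ-probability, there exists a non trivial infinite low-optimal path, i.e. an infinite sequence (z_n)_{n≥0} with z_0 = (0,0), z_{n+1} − z_n ∈ {(1,0),(0,1)}, each initial segment (z_0,…,z_n) equal to γ_{z_n}^ω, and which coincides with neither of the two axes ℤ₊(1,0) and ℤ₊(0,1). -/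
open scoped NNReal

/-- A site of the lattice `ℤ²`. -/
abbrev Site : Type := ℤ × ℤ

/-- The positive quadrant `ℤ₊²`. -/
def posQuad : Set Site := {z : Site | 0 ≤ z.1 ∧ 0 ≤ z.2}

/-- An admissible (up-right) step. -/
def IsStep (u v : Site) : Prop := v = u + (1, 0) ∨ v = u + (0, 1)

/-- `γ` is an up-right path from `(0,0)` to `z`, i.e. `γ ∈ Γ_z`. -/
def IsPathTo (z : Site) (γ : List Site) : Prop :=
  γ.head? = some ((0, 0) : Site) ∧ γ.getLast? = some z ∧ γ.Chain' IsStep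

/-- The length `ω(γ) = Σ_{z ∈ γ} ω(z)` of a path `γ` under the configuration `ω`. -/
noncomputable def plen (ω : Site → ℝ) (γ : List Site) : ℝ := (γ.map ω).sum

/-- `γ ∈ Γ_z` is `ω`-optimal if its length is maximal over `Γ_z`. -/
def IsOptimal (ω : Site → ℝ) (z : Site) (γ : List Site) : Prop :=
  IsPathTo z γ ∧ ∀ γ' : List Site, IsPathTo z γ' → plen ω γ' ≤ plen ω γ

/-- `γ` is below `γ'`: at every step index, the second coordinate of the site of `γ`
is at most that of the corresponding site of `γ'`. -/
def Below (γ γ' : List Site) : Prop :=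
  ∀ (i : ℕ) (h : i < γ.length) (h' : i < γ'.length),
    (γ.get ⟨i, h⟩).2 ≤ (γ'.get ⟨i, h'⟩).2

/-- `γ` is the low-optimal path of `Γ_z`: it is `ω`-optimal and below every
`ω`-optimal path of `Γ_z`. -/
def IsLowOptimal (ω : Site → ℝ) (z : Site) (γ : List Site) : Prop :=
  IsOptimal ω z γ ∧ ∀ γ' : List Site, IsOptimal ω z γ' → Below γ γ'

open Classical in
/-- The low-optimal path `γ_z^ω` (an arbitrary default when it does not exist). -/
noncomputable def lowOpt (ω : Site → ℝ) (z : Site) : List Site :=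
  if h : ∃ γ : List Site, IsLowOptimal ω z γ then h.choose else []

/-- The vertex set `V(T_z^ω) = {z' ∈ ℤ₊² : z ∈ γ_{z'}^ω}` of the subtree rooted at `z`. -/
def treeV (ω : Site → ℝ) (z : Site) : Set Site :=
  {z' : Site | z' ∈ posQuad ∧ z ∈ lowOpt ω z'}

/-- A point of the configuration space `Ω = [0,∞)^{ℤ²}`. -/
abbrev CfgNN : Type := Site → ℝ≥0

/-- The real-valued configuration associated to a point of `Ω`. -/
noncomputable def toCfg (ω : CfgNN) : Site → ℝ := fun z => (ω z : ℝ)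

/-- The translation operator `τ_a(ω) = ω(a + ·)` on `Ω`. -/
def shift (a : Site) (ω : CfgNN) : CfgNN := fun z => ω (a + z)

/-- `ω` admits a non trivial infinite low-optimal path. -/
def NonTrivInfPath (ω : Site → ℝ) : Prop :=
  ∃ f : ℕ → Site, f 0 = (0, 0) ∧ (∀ n : ℕ, IsStep (f n) (f (n + 1))) ∧
    (∀ n : ℕ, lowOpt ω (f n) = (List.range (n + 1)).map f) ∧
    (∃ n : ℕ, f n ≠ ((n : ℤ), 0)) ∧ (∃ n : ℕ, f n ≠ (0, (n : ℤ)))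

open MeasureTheory

namespace CoexAux

/-- Paths between two given sites. -/
def IsPathBtw (u v : Site) (γ : List Site) : Prop :=
  γ.head? = some u ∧ γ.getLast? = some v ∧ γ.Chain' IsStep

variable {u v w z : Site} {γ α β σ : List Site} {ω : Site → ℝ}

lemma isPathTo_iff : IsPathTo z γ ↔ IsPathBtw (0, 0) z γ := Iff.rfl

lemma isStep_sum {a b : Site} (h : IsStep a b) : b.1 + b.2 = a.1 + a.2 + 1 := by
  rcases h with h | h <;> subst h <;> simp [Prod.fst_add, Prod.snd_add] <;> ring

lemma isStep_le {a b : Site} (h : IsStep a b) : a.1 ≤ b.1 ∧ a.2 ≤ b.2 := by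
  rcases h with h | h <;> subst h <;>
    constructor <;> simp [Prod.fst_add, Prod.snd_add]

lemma isStep_add {a b c : Site} (h : IsStep a b) : IsStep (a + c) (b + c) := by
  rcases h with h | h <;> subst h <;> [left; right] <;>
    simp [add_assoc, add_comm c]

lemma isStep_sub {a b c : Site} (h : IsStep a b) : IsStep (a - c) (b - c) := by
  simpa [sub_eq_add_neg] using isStep_add (c := -c) h

namespace IsPathBtw

lemma ne_nil (h : IsPathBtw u v γ) : γ ≠ [] := by
  intro e
  rw [e] at h
  simp [IsPathBtw] at h

lemma length_pos (h : IsPathBtw u v γ) : 0 < γ.length :=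
  List.length_pos_iff.mpr h.ne_nil

lemma get_zero (h : IsPathBtw u v γ) (h0 : 0 < γ.length) : γ[0] = u := by
  have h1 := h.1
  rw [List.head?_eq_getElem?, List.getElem?_eq_getElem h0] at h1
  exact Option.some_injective _ h1

lemma get_last (h : IsPathBtw u v γ) (hl : γ.length - 1 < γ.length) :
    γ[γ.length - 1] = v := by
  have h1 := h.2.1
  rw [List.getLast?_eq_getElem?, List.getElem?_eq_getElem hl] at h1
  exact Option.some_injective _ h1

lemma step (h : IsPathBtw u v γ) (i : ℕ) (hi : i + 1 < γ.length) :
    IsStep (γ[i]'(by omega)) (γ[i + 1]'hi) := by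
  have := List.isChain_iff_getElem.mp h.2.2 i (by omega)
  simpa [List.get_eq_getElem] using this

lemma sum_eq (h : IsPathBtw u v γ) : ∀ i (hi : i < γ.length),
    (γ[i]'hi).1 + (γ[i]'hi).2 = u.1 + u.2 + i := by
  intro i
  induction i with
  | zero => intro hi; rw [h.get_zero hi]; simp
  | succ n ih =>
    intro hi
    have h1 : n < γ.length := by omega
    have h2 := isStep_sum (h.step n hi)
    have h3 := ih h1
    push_cast
    push_cast at h3
    omega

lemma length_eq (h : IsPathBtw u v γ) :
    (γ.length : ℤ) = v.1 + v.2 - (u.1 + u.2) + 1 := by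
  have hp := h.length_pos
  have hl : γ.length - 1 < γ.length := by omega
  have h1 := h.sum_eq (γ.length - 1) hl
  rw [h.get_last hl] at h1
  omega

lemma getElem_congr_idx {l : List Site} {i j : ℕ} (h : i = j) (hi : i < l.length) :
    l[i]'hi = l[j]'(h ▸ hi) := by subst h; rfl

lemma mono' (h : IsPathBtw u v γ) (i : ℕ) :
    ∀ n (hn : i + n < γ.length),
      (γ[i]'(by omega)).1 ≤ (γ[i + n]'hn).1 ∧ (γ[i]'(by omega)).2 ≤ (γ[i + n]'hn).2 := by
  intro n
  induction n with
  | zero => intro hn; exact ⟨le_refl _, le_refl _⟩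
  | succ n ih =>
    intro hn
    have h1 := ih (by omega)
    have h2 := isStep_le (h.step (i + n) hn)
    exact ⟨h1.1.trans h2.1, h1.2.trans h2.2⟩

lemma mono (h : IsPathBtw u v γ) {i j : ℕ} (hij : i ≤ j) (hj : j < γ.length)
    (hi : i < γ.length) :
    (γ[i]'hi).1 ≤ (γ[j]'hj).1 ∧ (γ[i]'hi).2 ≤ (γ[j]'hj).2 := by
  have he : i + (j - i) = j := by omega
  have := h.mono' i (j - i) (by omega)
  rwa [getElem_congr_idx he] at this

lemma take (h : IsPathBtw u v γ) {k : ℕ} (hk : k < γ.length) :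
    IsPathBtw u (γ[k]'hk) (γ.take (k + 1)) := by
  have hlen : (γ.take (k + 1)).length = k + 1 := by
    rw [List.length_take]; omega
  refine ⟨?_, ?_, h.2.2.take _⟩
  · rw [List.head?_eq_getElem?, List.getElem?_eq_getElem (by omega)]
    rw [List.getElem_take]
    rw [h.get_zero h.length_pos]
  · rw [List.getLast?_eq_getElem?, hlen]
    rw [List.getElem?_eq_getElem (by omega)]
    rw [List.getElem_take]
    rw [getElem_congr_idx (show k + 1 - 1 = k by omega)]

lemma drop (h : IsPathBtw u v γ) {k : ℕ} (hk : k < γ.length) :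
    IsPathBtw (γ[k]'hk) v (γ.drop k) := by
  refine ⟨?_, ?_, h.2.2.drop _⟩
  · rw [List.head?_drop, List.getElem?_eq_getElem hk]
  · rw [List.getLast?_eq_getElem?, List.length_drop, List.getElem?_drop]
    have he : k + (γ.length - k - 1) = γ.length - 1 := by omega
    rw [he, List.getElem?_eq_getElem (by omega), h.get_last (by omega)]

lemma map_add (h : IsPathBtw u v γ) (a : Site) :
    IsPathBtw (u + a) (v + a) (γ.map (· + a)) := by
  refine ⟨?_, ?_, ?_⟩
  · rw [List.head?_map, h.1]; rfl
  · rw [List.getLast?_map, h.2.1]; rfl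
  · show List.IsChain _ _; rw [List.isChain_map]
    exact List.IsChain.imp (fun a b hs => isStep_add hs) h.2.2

lemma map_sub (h : IsPathBtw u v γ) (a : Site) :
    IsPathBtw (u - a) (v - a) (γ.map (· - a)) := by
  simpa [sub_eq_add_neg] using h.map_add (-a)

end IsPathBtw

lemma plen_append {l₁ l₂ : List Site} : plen ω (l₁ ++ l₂) = plen ω l₁ + plen ω l₂ := by
  simp [plen]

lemma plen_cons {x : Site} {l : List Site} : plen ω (x :: l) = ω x + plen ω l := by
  simp [plen]

lemma plen_map_add {l : List Site} (a : Site) :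
    plen (fun x => ω (a + x)) l = plen ω (l.map (· + a)) := by
  simp only [plen, List.map_map]
  congr 1
  apply List.map_congr_left
  intro x _
  simp [add_comm]

lemma plen_map_sub {l : List Site} (a : Site) :
    plen (fun x => ω (a + x)) (l.map (· - a)) = plen ω l := by
  rw [plen_map_add a]
  congr 1
  rw [List.map_map]
  apply List.map_id''
  intro x
  simp

/-- Splicing two paths. -/
lemma IsPathBtw.splice {α β : List Site} (hα : IsPathBtw u w α) (hβ : IsPathBtw w v β) :
    IsPathBtw u v (α ++ β.tail) := by
  obtain ⟨t, rfl⟩ := List.head?_eq_some_iff.mp hβ.1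
  rcases t with _ | ⟨x, t⟩
  · have hv : w = v := by simpa [IsPathBtw] using hβ.2.1
    subst hv
    simpa using hα
  · refine ⟨?_, ?_, ?_⟩
    · rw [List.head?_append, hα.1]; rfl
    · rw [List.getLast?_append]
      have := hβ.2.1
      rw [List.getLast?_cons_cons] at this
      rw [List.tail_cons, this]
      rfl
    · show List.IsChain _ _; rw [List.isChain_append]
      refine ⟨hα.2.2, hβ.2.2.tail, ?_⟩
      intro a ha b hb
      rw [hα.2.1] at ha
      rw [List.tail_cons] at hb
      have hb' : x = b := by simpa using hb
      have ha' : w = a := by simpa using ha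
      subst ha'; subst hb'
      exact (List.isChain_cons_cons.mp hβ.2.2).1

lemma plen_splice {β : List Site} (hβ : β.head? = some w) (α : List Site) :
    plen ω (α ++ β.tail) = plen ω α + plen ω β - ω w := by
  obtain ⟨t, rfl⟩ := List.head?_eq_some_iff.mp hβ
  rw [List.tail_cons, plen_append, plen_cons]
  ring

end CoexAux
namespace CoexAux

variable {u v w z : Site} {γ α β σ : List Site} {ω : Site → ℝ}

lemma IsPathBtw.length_eq_length {σ : List Site} (h1 : IsPathBtw u v γ)
    (h2 : IsPathBtw u v σ) : γ.length = σ.length := by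
  have e1 := h1.length_eq
  have e2 := h2.length_eq
  omega

/-- A prefix of a low-optimal path is low-optimal. -/
theorem IsLowOptimal.take_seg (hγ : IsLowOptimal ω z γ) {k : ℕ} (hk : k < γ.length) :
    IsLowOptimal ω (γ[k]'hk) (γ.take (k + 1)) := by
  have hpath : IsPathBtw (0, 0) z γ := hγ.1.1
  have hα : IsPathBtw (0, 0) (γ[k]'hk) (γ.take (k + 1)) := hpath.take hk
  have hδ : IsPathBtw (γ[k]'hk) z (γ.drop k) := hpath.drop hk
  have hsplit : γ.take (k + 1) ++ (γ.drop k).tail = γ := by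
    rw [List.tail_drop]
    exact List.take_append_drop _ _
  have hplen : plen ω γ = plen ω (γ.take (k + 1)) + plen ω (γ.drop k) - ω (γ[k]'hk) := by
    conv_lhs => rw [← hsplit]
    exact plen_splice hδ.1 _
  have hopt : ∀ σ, IsPathTo (γ[k]'hk) σ → plen ω σ ≤ plen ω (γ.take (k + 1)) := by
    intro σ hσ
    have hρ : IsPathBtw (0, 0) z (σ ++ (γ.drop k).tail) := IsPathBtw.splice hσ hδ
    have h1 := hγ.1.2 _ hρ
    rw [plen_splice hδ.1 σ, hplen] at h1
    linarith
  refine ⟨⟨hα, hopt⟩, ?_⟩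
  intro σ hσ
  have hσp : IsPathBtw (0, 0) (γ[k]'hk) σ := hσ.1
  have hρ : IsPathBtw (0, 0) z (σ ++ (γ.drop k).tail) := IsPathBtw.splice hσp hδ
  have heq : plen ω σ = plen ω (γ.take (k + 1)) := le_antisymm (hopt σ hσ.1) (hσ.2 _ hα)
  have hρopt : IsOptimal ω z (σ ++ (γ.drop k).tail) := by
    refine ⟨hρ, ?_⟩
    intro τ hτ
    rw [plen_splice hδ.1 σ, heq, ← hplen]
    exact hγ.1.2 τ hτ
  have hbel := hγ.2 _ hρopt
  intro i hi hi'
  simp only [List.get_eq_getElem]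
  have hilen : i < γ.length := by
    rw [List.length_take] at hi; omega
  have hub : i < (σ ++ (γ.drop k).tail).length := by
    rw [List.length_append]; omega
  have h1 := hbel i hilen hub
  simp only [List.get_eq_getElem] at h1
  rw [List.getElem_take]
  rw [List.getElem_append_left hi'] at h1
  exact h1

/-- A suffix of a low-optimal path, translated back to the origin, is low-optimal
for the translated configuration. -/
theorem IsLowOptimal.drop_seg (hγ : IsLowOptimal ω z γ) {k : ℕ} (hk : k < γ.length) :
    IsLowOptimal (fun x => ω (γ[k]'hk + x)) (z - γ[k]'hk)
      ((γ.drop k).map (· - γ[k]'hk)) := by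
  have hpath : IsPathBtw (0, 0) z γ := hγ.1.1
  set w := γ[k]'hk with hw
  have hα : IsPathBtw (0, 0) w (γ.take (k + 1)) := hpath.take hk
  have hδ : IsPathBtw w z (γ.drop k) := hpath.drop hk
  have hδ' : IsPathBtw (0, 0) (z - w) ((γ.drop k).map (· - w)) := by
    have h0 : w - w = ((0 : ℤ), (0 : ℤ)) := by simp [Prod.ext_iff]
    have := hδ.map_sub w
    rwa [h0] at this
  have hαlen : (γ.take (k + 1)).length = k + 1 := by rw [List.length_take]; omega
  have hsplit : γ.take (k + 1) ++ (γ.drop k).tail = γ := by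
    rw [List.tail_drop]
    exact List.take_append_drop _ _
  have hplen : plen ω γ = plen ω (γ.take (k + 1)) + plen ω (γ.drop k) - ω w := by
    conv_lhs => rw [← hsplit]
    exact plen_splice hδ.1 _
  -- transport of a path for the shifted configuration
  have htrans : ∀ σ' : List Site, IsPathTo (z - w) σ' →
      IsPathBtw w z (σ'.map (· + w)) := by
    intro σ' hσ'
    have := (isPathTo_iff.mp hσ').map_add w
    have h0 : ((0 : ℤ), (0 : ℤ)) + w = w := by simp
    have h1 : z - w + w = z := by simp
    rwa [h0, h1] at this
  have hplen_tr : ∀ σ' : List Site,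
      plen (fun x => ω (w + x)) σ' = plen ω (σ'.map (· + w)) := fun σ' => plen_map_add w
  have hopt : ∀ σ', IsPathTo (z - w) σ' →
      plen (fun x => ω (w + x)) σ' ≤ plen (fun x => ω (w + x)) ((γ.drop k).map (· - w)) := by
    intro σ' hσ'
    have hσ : IsPathBtw w z (σ'.map (· + w)) := htrans σ' hσ'
    have hρ : IsPathBtw (0, 0) z (γ.take (k + 1) ++ (σ'.map (· + w)).tail) :=
      IsPathBtw.splice hα hσ
    have h1 := hγ.1.2 _ hρ
    rw [plen_splice hσ.1 _, hplen] at h1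
    rw [hplen_tr σ', plen_map_sub w]
    linarith
  refine ⟨⟨hδ', hopt⟩, ?_⟩
  intro σ' hσ'opt
  have hσ : IsPathBtw w z (σ'.map (· + w)) := htrans σ' hσ'opt.1
  have heq : plen ω (σ'.map (· + w)) = plen ω (γ.drop k) := by
    have h1 := hopt σ' hσ'opt.1
    have h2 := hσ'opt.2 _ hδ'
    rw [hplen_tr σ', plen_map_sub w] at h1 h2
    linarith
  have hρ : IsPathBtw (0, 0) z (γ.take (k + 1) ++ (σ'.map (· + w)).tail) :=
    IsPathBtw.splice hα hσ
  have hρopt : IsOptimal ω z (γ.take (k + 1) ++ (σ'.map (· + w)).tail) := by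
    refine ⟨hρ, ?_⟩
    intro τ hτ
    rw [plen_splice hσ.1 _, heq, ← hplen]
    exact hγ.1.2 τ hτ
  have hbel := hγ.2 _ hρopt
  -- length bookkeeping
  have hσδlen : (σ'.map (· + w)).length = (γ.drop k).length := hσ.length_eq_length hδ
  have hδlen : (γ.drop k).length = γ.length - k := List.length_drop
  intro j hj hj'
  simp only [List.get_eq_getElem, List.getElem_map]
  have hjδ : j < (γ.drop k).length := by
    rw [List.length_map] at hj; exact hj
  have hjσ : j < (σ'.map (· + w)).length := by
    rw [List.length_map]; exact hj'
  -- identify ρ[k+j] with (σ'.map (·+w))[j]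
  have hkj : k + j < γ.length := by omega
  have hρlen : (γ.take (k + 1) ++ (σ'.map (· + w)).tail).length = γ.length := by
    rw [List.length_append, hαlen, List.length_tail, hσδlen]
    omega
  have hkjρ : k + j < (γ.take (k + 1) ++ (σ'.map (· + w)).tail).length := by omega
  have hρval : (γ.take (k + 1) ++ (σ'.map (· + w)).tail)[k + j]'hkjρ
      = (σ'.map (· + w))[j]'hjσ := by
    rcases Nat.eq_zero_or_pos j with hj0 | hj0
    · subst hj0
      rw [List.getElem_append_left (by omega : k + 0 < (γ.take (k+1)).length)]
      rw [IsPathBtw.getElem_congr_idx (show k + 0 = k by omega), List.getElem_take]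
      have := hσ.get_zero (by rw [hσδlen]; omega)
      rw [this]
    · rw [List.getElem_append_right (by omega : (γ.take (k+1)).length ≤ k + j)]
      rw [List.getElem_tail]
      apply IsPathBtw.getElem_congr_idx
      omega
  have hb := hbel (k + j) hkj hkjρ
  simp only [List.get_eq_getElem] at hb
  rw [hρval] at hb
  rw [List.getElem_map] at hb
  have hδval : (γ.drop k)[j]'hjδ = γ[k + j]'hkj := List.getElem_drop
  rw [hδval]
  have : (γ[k+j]'hkj).2 ≤ (σ'[j]'(by rw [List.length_map] at hjσ; exact hjσ) + w).2 := hb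
  have h2 : (σ'[j]'(by rw [List.length_map] at hjσ; exact hjσ) + w).2
      = (σ'[j]'_).2 + w.2 := rfl
  simp only [Prod.snd_sub, Prod.snd_add] at this ⊢
  omega

lemma IsLowOptimal.unique {σ : List Site} (h1 : IsLowOptimal ω z γ)
    (h2 : IsLowOptimal ω z σ) : γ = σ := by
  have p1 : IsPathBtw (0, 0) z γ := h1.1.1
  have p2 : IsPathBtw (0, 0) z σ := h2.1.1
  have hlen : γ.length = σ.length := p1.length_eq_length p2
  apply List.ext_getElem hlen
  intro i hi1 hi2
  have b1 := h1.2 σ h2.1 i hi1 hi2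
  have b2 := h2.2 γ h1.1 i hi2 hi1
  simp only [List.get_eq_getElem] at b1 b2
  have h2eq : (γ[i]'hi1).2 = (σ[i]'hi2).2 := le_antisymm b1 b2
  have s1 := p1.sum_eq i hi1
  have s2 := p2.sum_eq i hi2
  have h1eq : (γ[i]'hi1).1 = (σ[i]'hi2).1 := by omega
  exact Prod.ext h1eq h2eq

lemma lowOpt_eq (h : IsLowOptimal ω z γ) : lowOpt ω z = γ := by
  have hex : ∃ γ', IsLowOptimal ω z γ' := ⟨γ, h⟩
  rw [lowOpt, dif_pos hex]
  exact IsLowOptimal.unique hex.choose_spec h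

lemma lowOpt_isLowOptimal (h : lowOpt ω z ≠ []) : IsLowOptimal ω z (lowOpt ω z) := by
  by_cases hex : ∃ γ', IsLowOptimal ω z γ'
  · rw [lowOpt, dif_pos hex]
    exact hex.choose_spec
  · rw [lowOpt, dif_neg hex] at h
    exact absurd rfl h

end CoexAux
namespace CoexAux

variable {ω : Site → ℝ}

lemma getLastD_eq {l : List Site} {d : Site} (h : 0 < l.length) :
    l.getLastD d = l[l.length - 1]'(by omega) := by
  rw [List.getLastD_eq_getLast?, List.getLast?_eq_getElem?,
    List.getElem?_eq_getElem (by omega)]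
  rfl

/-- Sites of the tree at `(1,1)` whose low-optimal path extends `δ`. -/
def goodSet (ω : Site → ℝ) (δ : List Site) : Set Site :=
  {z' | z' ∈ treeV ω ((1 : ℤ), (1 : ℤ)) ∧ δ <+: lowOpt ω z'}

lemma treeV_lowOpt {z' : Site} (h : z' ∈ treeV ω ((1 : ℤ), (1 : ℤ))) :
    IsLowOptimal ω z' (lowOpt ω z') := by
  apply lowOpt_isLowOptimal
  intro he
  have h2 := h.2
  rw [he] at h2
  exact absurd h2 List.not_mem_nil

lemma good_zero (h : (treeV ω ((1 : ℤ), (1 : ℤ))).Infinite) :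
    (goodSet ω [((0 : ℤ), (0 : ℤ))]).Infinite := by
  apply h.mono
  intro z' hz'
  refine ⟨hz', ?_⟩
  have hlo := treeV_lowOpt hz'
  obtain ⟨t, ht⟩ := List.head?_eq_some_iff.mp hlo.1.1.1
  exact ⟨t, ht.symm⟩

lemma good_ext {δ : List Site} (hδne : δ ≠ []) (hδ : (goodSet ω δ).Infinite) :
    ∃ x, IsStep (δ.getLastD (0, 0)) x ∧ (goodSet ω (δ ++ [x])).Infinite := by
  set l := δ.getLastD (0, 0) with hl
  have hn1 : 0 < δ.length := List.length_pos_iff.mpr hδne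
  have hsub : goodSet ω δ \ {l} ⊆
      goodSet ω (δ ++ [l + (1, 0)]) ∪ goodSet ω (δ ++ [l + (0, 1)]) := by
    rintro z' ⟨⟨htree, hpre⟩, hne⟩
    have hlo := treeV_lowOpt htree
    have hpathB : IsPathBtw (0, 0) z' (lowOpt ω z') := hlo.1.1
    have hδlen : δ.length ≤ (lowOpt ω z').length := hpre.length_le
    by_cases hlen : (lowOpt ω z').length = δ.length
    · exfalso
      have heq : δ = lowOpt ω z' := hpre.eq_of_length hlen.symm
      apply hne
      have hz'last := hpathB.2.1
      rw [← heq] at hz'last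
      rw [hl, List.getLastD_eq_getLast?, hz'last]
      rfl
    · have hlt : δ.length < (lowOpt ω z').length := by omega
      have hpre' : δ ++ [(lowOpt ω z')[δ.length]'hlt] <+: lowOpt ω z' := by
        rw [List.prefix_iff_eq_take, List.length_append]
        simp only [List.length_singleton]
        rw [List.take_succ, List.getElem?_eq_getElem hlt]
        rw [← List.prefix_iff_eq_take.mp hpre]
        rfl
      have hstep : IsStep ((lowOpt ω z')[δ.length - 1]'(by omega))
          ((lowOpt ω z')[δ.length]'hlt) := by
        have hs := hpathB.step (δ.length - 1) (by omega)
        rwa [IsPathBtw.getElem_congr_idx (show δ.length - 1 + 1 = δ.length by omega)] at hs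
      have hle : (lowOpt ω z')[δ.length - 1]'(by omega) = l := by
        have hp := hpre.getElem (show δ.length - 1 < δ.length by omega)
        rw [← hp, hl, getLastD_eq hn1]
      rw [hle] at hstep
      rcases hstep with hs | hs
      · left
        refine ⟨htree, ?_⟩
        rwa [← hs]
      · right
        refine ⟨htree, ?_⟩
        rwa [← hs]
  have hdiff : (goodSet ω δ \ {l}).Infinite := hδ.diff (Set.finite_singleton _)
  have hun := hdiff.mono hsub
  rcases Set.infinite_union.mp hun with h1 | h1
  · exact ⟨l + (1, 0), Or.inl rfl, h1⟩
  · exact ⟨l + (0, 1), Or.inr rfl, h1⟩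

open Classical in
/-- One extension step of the constructed infinite low-optimal path. -/
noncomputable def extOne (ω : Site → ℝ) (δ : List Site) : List Site :=
  if h : ∃ x, IsStep (δ.getLastD (0, 0)) x ∧ (goodSet ω (δ ++ [x])).Infinite
  then δ ++ [h.choose] else δ

/-- The sequence of initial segments of the constructed infinite low-optimal path. -/
noncomputable def chainL (ω : Site → ℝ) : ℕ → List Site
  | 0 => [((0 : ℤ), (0 : ℤ))]
  | n + 1 => extOne ω (chainL ω n)

/-- The constructed infinite low-optimal path. -/
noncomputable def fpt (ω : Site → ℝ) (n : ℕ) : Site := (chainL ω n).getLastD (0, 0)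

lemma chainL_all (h : (treeV ω ((1 : ℤ), (1 : ℤ))).Infinite) (n : ℕ) :
    (goodSet ω (chainL ω n)).Infinite ∧ chainL ω n ≠ [] ∧
      (chainL ω n).length = n + 1 ∧ chainL ω n = (List.range (n + 1)).map (fpt ω) := by
  induction n with
  | zero =>
    refine ⟨good_zero h, by simp [chainL], by simp [chainL], ?_⟩
    simp [chainL, List.range_succ, fpt]
  | succ n ih =>
    have hex := good_ext ih.2.1 ih.1
    have hch : chainL ω (n + 1) = chainL ω n ++ [hex.choose] := by
      show extOne ω (chainL ω n) = _
      rw [extOne, dif_pos hex]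
    have hf : fpt ω (n + 1) = hex.choose := by
      rw [fpt, hch, List.getLastD_eq_getLast?, List.getLast?_concat]
      rfl
    refine ⟨?_, ?_, ?_, ?_⟩
    · rw [hch]; exact hex.choose_spec.2
    · rw [hch]; simp
    · rw [hch, List.length_append, ih.2.2.1]; rfl
    · rw [hch, List.range_succ, List.map_append, ← ih.2.2.2]
      simp [hf]

lemma chainL_step (h : (treeV ω ((1 : ℤ), (1 : ℤ))).Infinite) (n : ℕ) :
    IsStep (fpt ω n) (fpt ω (n + 1)) := by
  have ih := chainL_all h n
  have hex := good_ext ih.2.1 ih.1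
  have hch : chainL ω (n + 1) = chainL ω n ++ [hex.choose] := by
    show extOne ω (chainL ω n) = _
    rw [extOne, dif_pos hex]
  have hf : fpt ω (n + 1) = hex.choose := by
    rw [fpt, hch, List.getLastD_eq_getLast?, List.getLast?_concat]
    rfl
  rw [hf]
  exact hex.choose_spec.1

lemma fpt_eq_getElem (h : (treeV ω ((1 : ℤ), (1 : ℤ))).Infinite) (n : ℕ) :
    fpt ω n = (chainL ω n)[n]'(by rw [(chainL_all h n).2.2.1]; omega) := by
  have hlen := (chainL_all h n).2.2.1
  rw [fpt, getLastD_eq (by omega)]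
  apply IsPathBtw.getElem_congr_idx
  omega

lemma forward_ptwise (ω : Site → ℝ) (h : (treeV ω ((1 : ℤ), (1 : ℤ))).Infinite) :
    NonTrivInfPath ω := by
  have hlow : ∀ n, lowOpt ω (fpt ω n) = (List.range (n + 1)).map (fpt ω) := by
    intro n
    have hall := chainL_all h n
    obtain ⟨z', hz'⟩ := hall.1.nonempty
    obtain ⟨htree, hpre⟩ := hz'
    have hlo := treeV_lowOpt htree
    have hlt : n < (lowOpt ω z').length := by
      have := hpre.length_le
      rw [hall.2.2.1] at this
      omega
    have hseg := IsLowOptimal.take_seg hlo hlt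
    have htake : (lowOpt ω z').take (n + 1) = chainL ω n := by
      have := List.prefix_iff_eq_take.mp hpre
      rw [hall.2.2.1] at this
      exact this.symm
    have hget : (lowOpt ω z')[n]'hlt = fpt ω n := by
      rw [fpt_eq_getElem h n]
      exact (hpre.getElem (by rw [hall.2.2.1]; omega)).symm
    rw [htake, hget] at hseg
    rw [lowOpt_eq hseg]
    exact hall.2.2.2
  have hf2 : fpt ω 2 = ((1 : ℤ), (1 : ℤ)) := by
    have hall := chainL_all h 2
    obtain ⟨z', hz'⟩ := hall.1.nonempty
    obtain ⟨htree, hpre⟩ := hz'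
    have hlo := treeV_lowOpt htree
    have hpathB : IsPathBtw (0, 0) z' (lowOpt ω z') := hlo.1.1
    obtain ⟨i, hi, hgi⟩ := List.mem_iff_getElem.mp htree.2
    have hsum := hpathB.sum_eq i hi
    rw [hgi] at hsum
    have hi2 : i = 2 := by
      simp only [Prod.fst_zero, Prod.snd_zero] at hsum
      omega
    subst hi2
    rw [fpt_eq_getElem h 2]
    rw [hpre.getElem (by rw [hall.2.2.1]; omega)]
    exact hgi
  refine ⟨fpt ω, by simp [fpt, chainL], chainL_step h, hlow, ⟨2, ?_⟩, ⟨2, ?_⟩⟩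
  · rw [hf2]
    intro hcon
    have := congrArg Prod.snd hcon
    norm_num at this
  · rw [hf2]
    intro hcon
    have := congrArg Prod.fst hcon
    norm_num at this

end CoexAux
namespace CoexAux

lemma IsPathBtw.le_last {u v : Site} {γ : List Site} (h : IsPathBtw u v γ) :
    u.1 ≤ v.1 ∧ u.2 ≤ v.2 := by
  have hp := h.length_pos
  have h0 := h.get_zero hp
  have hl := h.get_last (by omega)
  have hm := h.mono (i := 0) (j := γ.length - 1) (by omega) (by omega) (by omega)
  rw [h0, hl] at hm
  exact hm

lemma backward_ptwise (ω : Site → ℝ) (h : NonTrivInfPath ω) :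
    ∃ a : Site, (treeV (fun x => ω (a + x)) ((1 : ℤ), (1 : ℤ))).Infinite := by
  obtain ⟨f, hf0, hstep, hlow, ⟨n1, hn1⟩, ⟨n2, hn2⟩⟩ := h
  have hLO : ∀ n, IsLowOptimal ω (f n) ((List.range (n + 1)).map f) := by
    intro n
    have hne : lowOpt ω (f n) ≠ [] := by
      rw [hlow n]; simp
    have := lowOpt_isLowOptimal hne
    rwa [hlow n] at this
  set P : ℕ → Prop := fun m => f (m + 1) = f m + (1, 0) with hP
  have hAll : (∀ m, P m) → ∀ m, f m = ((m : ℤ), 0) := by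
    intro hp m
    induction m with
    | zero => rw [hf0]; simp
    | succ j ih =>
      rw [hp j, ih]
      simp [Prod.ext_iff]
  have hAll' : (∀ m, ¬P m) → ∀ m, f m = (0, (m : ℤ)) := by
    intro hp m
    induction m with
    | zero => rw [hf0]; simp
    | succ j ih =>
      rcases hstep j with hs | hs
      · exact absurd hs (hp j)
      · rw [hs, ih]
        simp [Prod.ext_iff]
  have hconst : ¬ (∀ m, (P m ↔ P (m + 1))) := by
    intro hc
    by_cases h0 : P 0
    · have hallP : ∀ m, P m := by
        intro m
        induction m with
        | zero => exact h0
        | succ j ih => exact (hc j).mp ih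
      exact hn1 (hAll hallP n1)
    · have hallP : ∀ m, ¬P m := by
        intro m
        induction m with
        | zero => exact h0
        | succ j ih => exact fun hp => ih ((hc j).mpr hp)
      exact hn2 (hAll' hallP n2)
  have hk : ∃ k, f (k + 2) = f k + (1, 1) := by
    by_contra hcon
    push_neg at hcon
    apply hconst
    intro m
    constructor
    · intro hm
      by_contra hm1
      rcases hstep (m + 1) with hs | hs
      · exact hm1 hs
      · exact hcon m (by rw [hs, hm, add_assoc]; norm_num [Prod.ext_iff])
    · intro hm1
      by_contra hm
      rcases hstep m with hs | hs
      · exact hm hs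
      · exact hcon m (by rw [hm1, hs, add_assoc]; norm_num [Prod.ext_iff])
  obtain ⟨k, hk2⟩ := hk
  refine ⟨f k, ?_⟩
  set g : ℕ → Site := fun n => f (k + n) - f k with hg
  have hglow : ∀ n, IsLowOptimal (fun x => ω (f k + x)) (g n)
      ((List.range (n + 1)).map g) := by
    intro n
    have hγ := hLO (k + n)
    have hkl : k < ((List.range (k + n + 1)).map f).length := by simp
    have hseg := IsLowOptimal.drop_seg hγ hkl
    have hgetk : ((List.range (k + n + 1)).map f)[k]'hkl = f k := by
      rw [List.getElem_map, List.getElem_range]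
    rw [hgetk] at hseg
    have hlist : ((((List.range (k + n + 1)).map f).drop k).map (· - f k))
        = (List.range (n + 1)).map g := by
      rw [← List.map_drop]
      have hdrop : (List.range (k + n + 1)).drop k = (List.range (n + 1)).map (k + ·) := by
        rw [show k + n + 1 = k + (n + 1) by omega, List.range_add]
        have hdl := List.drop_left (l₁ := List.range k) (l₂ := (List.range (n + 1)).map (k + ·))
        rwa [List.length_range] at hdl
      rw [hdrop, List.map_map, List.map_map]
      rfl
    rw [hlist] at hseg
    exact hseg
  have hglowOpt : ∀ n, lowOpt (fun x => ω (f k + x)) (g n) = (List.range (n + 1)).map g :=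
    fun n => lowOpt_eq (hglow n)
  have hg2 : g 2 = ((1 : ℤ), (1 : ℤ)) := by
    show f (k + 2) - f k = _
    rw [hk2]
    simp
  have hmem : ∀ n : ℕ, g (n + 2) ∈ treeV (fun x => ω (f k + x)) ((1 : ℤ), (1 : ℤ)) := by
    intro n
    constructor
    · have hp : IsPathBtw (0, 0) (g (n + 2)) ((List.range (n + 3)).map g) :=
        (hglow (n + 2)).1.1
      have := hp.le_last
      exact ⟨this.1, this.2⟩
    · rw [hglowOpt (n + 2), ← hg2]
      exact List.mem_iff_getElem.mpr
        ⟨2, by simp, by rw [List.getElem_map, List.getElem_range]⟩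
  have hsum : ∀ m : ℕ, (g m).1 + (g m).2 = m := by
    intro m
    have hp : IsPathBtw (0, 0) (g m) ((List.range (m + 1)).map g) := (hglow m).1.1
    have hlen := hp.length_eq
    simp only [List.length_map, List.length_range, Prod.fst_zero, Prod.snd_zero] at hlen
    push_cast at hlen
    omega
  apply Set.infinite_of_injective_forall_mem (f := fun n : ℕ => g (n + 2)) ?_ hmem
  intro a b hab
  have hab' : g (a + 2) = g (b + 2) := hab
  have ha := hsum (a + 2)
  have hb := hsum (b + 2)
  rw [hab'] at ha
  omega

end CoexAux

/-- `ℙ(Coex) > 0` iff with positive probability there exists a non trivial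
infinite low-optimal path. -/
theorem coexistence_iff (ℙ : Measure CfgNN) [IsProbabilityMeasure ℙ]
    (hinv : ∀ a : Site, ℙ.map (shift a) = ℙ) :
    0 < ℙ {ω : CfgNN | (treeV (toCfg ω) (1, 1)).Infinite} ↔
      0 < ℙ {ω : CfgNN | NonTrivInfPath (toCfg ω)} := by
  constructor
  · intro h
    refine h.trans_le (measure_mono ?_)
    intro ω hω
    exact CoexAux.forward_ptwise (toCfg ω) hω
  · intro h
    by_contra hB
    have hB0 : ℙ {ω : CfgNN | (treeV (toCfg ω) (1, 1)).Infinite} = 0 := by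
      by_contra h0
      exact hB (pos_iff_ne_zero.mpr h0)
    have hms : ∀ a : Site, Measurable (shift a) := fun a =>
      measurable_pi_lambda _ fun z => measurable_pi_apply _
    have hpre : ∀ a : Site,
        ℙ (shift a ⁻¹' {ω : CfgNN | (treeV (toCfg ω) (1, 1)).Infinite}) = 0 := by
      intro a
      refine le_antisymm ?_ zero_le
      have h1 : ℙ (shift a ⁻¹' {ω : CfgNN | (treeV (toCfg ω) (1, 1)).Infinite})
          ≤ (ℙ.map (shift a)) {ω : CfgNN | (treeV (toCfg ω) (1, 1)).Infinite} :=
        Measure.le_map_apply (hms a).aemeasurable _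
      rw [hinv a, hB0] at h1
      exact h1
    have hsub : {ω : CfgNN | NonTrivInfPath (toCfg ω)} ⊆
        ⋃ a : Site, shift a ⁻¹' {ω : CfgNN | (treeV (toCfg ω) (1, 1)).Infinite} := by
      intro ω hω
      obtain ⟨a, ha⟩ := CoexAux.backward_ptwise (toCfg ω) hω
      exact Set.mem_iUnion.mpr ⟨a, ha⟩
    have hzero : ℙ {ω : CfgNN | NonTrivInfPath (toCfg ω)} = 0 :=
      le_antisymm ((measure_mono hsub).trans
        (le_of_eq (measure_iUnion_null hpre))) zero_le
    rw [hzero] at h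
    exact lt_irrefl _ h
end

section
/- Let ω ∈ Ω and ε : ℤ² → ℝ be such that ω + ε ∈ Ω (i.e. ω + ε is nonnegative). For every z ∈ ℤ₊², if the low-optimal paths γ_z^{ω+ε} and γ_z^ω are distinct, then ε(γ_z^ω) < ε(γ_z^{ω+ε}), where ε(γ) = Σ_{z'∈γ} ε(z'). -/
open scoped NNReal

/-! ### Auxiliary lemmas -/

lemma isStep_of_coords {u v : Site} {i : ℕ} (hu : u.1 + u.2 = (i : ℤ))
    (hv : v.1 + v.2 = (i : ℤ) + 1) (h2 : v.2 = u.2 ∨ v.2 = u.2 + 1) : IsStep u v := by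
  obtain ⟨ux, uy⟩ := u
  obtain ⟨vx, vy⟩ := v
  simp only [IsStep, Prod.mk_add_mk, Prod.mk.injEq] at *
  omega

lemma path_ne_nil {z : Site} {γ : List Site} (h : IsPathTo z γ) : γ ≠ [] := by
  intro e
  rw [e] at h
  simp [IsPathTo] at h

lemma path_zero {z : Site} {γ : List Site} (h : IsPathTo z γ) (h0 : 0 < γ.length) :
    γ[0]'h0 = ((0, 0) : Site) := by
  have h1 := h.1
  rwa [List.head?_eq_getElem?, List.getElem?_eq_getElem h0, Option.some_inj] at h1

lemma path_last {z : Site} {γ : List Site} (h : IsPathTo z γ) (h0 : 0 < γ.length) :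
    γ[γ.length - 1]'(by omega) = z := by
  have h1 := h.2.1
  rwa [List.getLast?_eq_getElem?, List.getElem?_eq_getElem (by omega), Option.some_inj] at h1

lemma path_step {z : Site} {γ : List Site} (h : IsPathTo z γ) (i : ℕ) (hi : i + 1 < γ.length) :
    IsStep (γ[i]'(by omega)) (γ[i+1]'hi) := by
  have := List.isChain_iff_getElem.1 h.2.2 i (by omega)
  simpa using this

lemma path_snd_step {z : Site} {γ : List Site} (h : IsPathTo z γ) (i : ℕ)
    (hi : i + 1 < γ.length) :
    (γ[i+1]'hi).2 = (γ[i]'(by omega)).2 ∨ (γ[i+1]'hi).2 = (γ[i]'(by omega)).2 + 1 := by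
  rcases path_step h i hi with e | e
  · left; rw [e]; simp
  · right; rw [e]; simp

lemma path_coords {z : Site} {γ : List Site} (h : IsPathTo z γ) :
    ∀ (i : ℕ) (hi : i < γ.length),
      (γ[i]'hi).1 + (γ[i]'hi).2 = (i : ℤ) ∧ 0 ≤ (γ[i]'hi).2 ∧ (γ[i]'hi).2 ≤ (i : ℤ) := by
  intro i
  induction i with
  | zero =>
    intro hi
    rw [path_zero h hi]
    simp
  | succ n ih =>
    intro hi
    have h1 : n < γ.length := by omega
    obtain ⟨hs, h0, hle⟩ := ih h1
    have hstep := path_snd_step h n hi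
    have hfst : (γ[n+1]'hi).1 + (γ[n+1]'hi).2 = (γ[n]'h1).1 + (γ[n]'h1).2 + 1 := by
      rcases path_step h n hi with e | e <;> rw [e] <;> simp [Prod.fst_add, Prod.snd_add] <;> ring
    refine ⟨by push_cast; omega, by omega, by push_cast; omega⟩

lemma path_length {z : Site} {γ : List Site} (h : IsPathTo z γ) :
    γ.length = (z.1 + z.2).toNat + 1 := by
  have h0 : 0 < γ.length := List.length_pos_iff.2 (path_ne_nil h)
  have hlast := path_last h h0
  have hc := (path_coords h (γ.length - 1) (by omega)).1
  rw [hlast] at hc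
  omega

lemma path_eq_of_snd {z : Site} {γ γ' : List Site} (h : IsPathTo z γ) (h' : IsPathTo z γ')
    (hs : ∀ (i : ℕ) (hi : i < γ.length) (hi' : i < γ'.length), (γ[i]'hi).2 = (γ'[i]'hi').2) :
    γ = γ' := by
  have hl : γ.length = γ'.length := by rw [path_length h, path_length h']
  apply List.ext_getElem hl
  intro i h1 h2
  have c1 := (path_coords h i h1).1
  have c2 := (path_coords h' i h2).1
  have hsnd := hs i h1 h2
  exact Prod.ext (by omega) hsnd

lemma below_antisymm {z : Site} {γ γ' : List Site} (h : IsPathTo z γ) (h' : IsPathTo z γ')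
    (h1 : Below γ γ') (h2 : Below γ' γ) : γ = γ' := by
  apply path_eq_of_snd h h'
  intro i hi hi'
  have b1 := h1 i hi hi'
  have b2 := h2 i hi' hi
  simp only [List.get_eq_getElem] at b1 b2
  omega

/-! ### `plen` lemmas -/

lemma plen_eq_sum (ω : Site → ℝ) (γ : List Site) :
    plen ω γ = ∑ i : Fin γ.length, ω (γ[(i : ℕ)]) := by
  rw [plen, ← List.ofFn_getElem_eq_map γ ω, List.sum_ofFn]

lemma plen_eq_range (ω : Site → ℝ) (γ : List Site) :
    plen ω γ = ∑ i ∈ Finset.range γ.length, ω (γ.getD i (0, 0)) := by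
  rw [plen_eq_sum, ← Fin.sum_univ_eq_sum_range (fun i => ω (γ.getD i (0, 0))) γ.length]
  exact Finset.sum_congr rfl fun i _ => by rw [List.getD_eq_getElem _ _ i.isLt]

lemma plen_add (ω ε : Site → ℝ) (γ : List Site) :
    plen (fun s => ω s + ε s) γ = plen ω γ + plen ε γ := by
  induction γ with
  | nil => simp [plen]
  | cons a l ih =>
    simp only [plen, List.map_cons, List.sum_cons] at *
    linarith

lemma plen_le_of (f : Site → ℝ) {γ η : List Site} (hl : γ.length = η.length)
    (hle : ∀ (i : ℕ) (hi : i < γ.length) (hi' : i < η.length), f (γ[i]'hi) ≤ f (η[i]'hi')) :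
    plen f γ ≤ plen f η := by
  rw [plen_eq_range, plen_eq_range, ← hl]
  refine Finset.sum_le_sum fun i hi => ?_
  have h1 : i < γ.length := Finset.mem_range.1 hi
  have h2 : i < η.length := by omega
  rw [List.getD_eq_getElem _ _ h1, List.getD_eq_getElem _ _ h2]
  exact hle i h1 h2

lemma plen_lt_of (f : Site → ℝ) {γ η : List Site} (hl : γ.length = η.length)
    (hle : ∀ (i : ℕ) (hi : i < γ.length) (hi' : i < η.length), f (γ[i]'hi) ≤ f (η[i]'hi'))
    (hlt : ∃ (i : ℕ) (hi : i < γ.length) (hi' : i < η.length), f (γ[i]'hi) < f (η[i]'hi')) :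
    plen f γ < plen f η := by
  rw [plen_eq_range, plen_eq_range, ← hl]
  obtain ⟨i, hi, hi', hlt⟩ := hlt
  refine Finset.sum_lt_sum (fun j hj => ?_) ⟨i, Finset.mem_range.2 hi, ?_⟩
  · have h1 : j < γ.length := Finset.mem_range.1 hj
    have h2 : j < η.length := by omega
    rw [List.getD_eq_getElem _ _ h1, List.getD_eq_getElem _ _ h2]
    exact hle j h1 h2
  · rw [List.getD_eq_getElem _ _ hi, List.getD_eq_getElem _ _ hi']
    exact hlt

/-! ### Meet and join of paths -/

/-- The pointwise lower of two sites (by second coordinate). -/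
def pick (a b : Site) : Site := if a.2 ≤ b.2 then a else b

/-- The pointwise upper of two sites (by second coordinate). -/
def pick' (a b : Site) : Site := if a.2 ≤ b.2 then b else a

lemma pick_or (a b : Site) : pick a b = a ∨ pick a b = b := by
  unfold pick; split <;> simp

lemma pick'_or (a b : Site) : pick' a b = a ∨ pick' a b = b := by
  unfold pick'; split <;> simp

lemma pick_snd (a b : Site) : (pick a b).2 = min a.2 b.2 := by
  unfold pick; split <;> omega

lemma pick'_snd (a b : Site) : (pick' a b).2 = max a.2 b.2 := by
  unfold pick'; split <;> omega

lemma pick_add_pick' (f : Site → ℝ) (a b : Site) :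
    f (pick a b) + f (pick' a b) = f a + f b := by
  unfold pick pick'; split <;> ring

lemma zip_isPathTo {z : Site} {γ η : List Site} (hγ : IsPathTo z γ) (hη : IsPathTo z η)
    (p : Site → Site → Site) (hor : ∀ a b, p a b = a ∨ p a b = b)
    (hq : ∀ a b a' b', (a'.2 = a.2 ∨ a'.2 = a.2 + 1) → (b'.2 = b.2 ∨ b'.2 = b.2 + 1) →
      ((p a' b').2 = (p a b).2 ∨ (p a' b').2 = (p a b).2 + 1))
    (hdiag : ∀ a, p a a = a) :
    IsPathTo z (List.zipWith p γ η) := by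
  have hl : γ.length = η.length := by rw [path_length hγ, path_length hη]
  have h0γ : 0 < γ.length := List.length_pos_iff.2 (path_ne_nil hγ)
  have hlen : (List.zipWith p γ η).length = γ.length := by
    rw [List.length_zipWith]; omega
  have h0 : 0 < (List.zipWith p γ η).length := by omega
  have hget : ∀ (i : ℕ) (hi : i < (List.zipWith p γ η).length),
      (List.zipWith p γ η)[i]'hi = p (γ[i]'(by omega)) (η[i]'(by omega)) := by
    intro i hi
    rw [List.getElem_zipWith]
  have hcoords : ∀ (i : ℕ) (hi : i < (List.zipWith p γ η).length),
      ((List.zipWith p γ η)[i]'hi).1 + ((List.zipWith p γ η)[i]'hi).2 = (i : ℤ) := by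
    intro i hi
    rw [hget i hi]
    rcases hor (γ[i]'(by omega)) (η[i]'(by omega)) with e | e <;> rw [e]
    · exact (path_coords hγ i (by omega)).1
    · exact (path_coords hη i (by omega)).1
  refine ⟨?_, ?_, ?_⟩
  · rw [List.head?_eq_getElem?, List.getElem?_eq_getElem h0, hget 0 h0]
    rw [path_zero hγ h0γ, path_zero hη (by omega), hdiag]
  · rw [List.getLast?_eq_getElem?, List.getElem?_eq_getElem (by omega : (List.zipWith p γ η).length - 1 < _)]
    have hlast : (List.zipWith p γ η).length - 1 = γ.length - 1 := by omega
    rw [hget _ _]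
    have e1 : γ[(List.zipWith p γ η).length - 1]'(by omega) = z := by
      simp_rw [hlast]; exact path_last hγ h0γ
    have e2 : η[(List.zipWith p γ η).length - 1]'(by omega) = z := by
      have : (List.zipWith p γ η).length - 1 = η.length - 1 := by omega
      simp_rw [this]; exact path_last hη (by omega)
    rw [e1, e2, hdiag]
  · refine List.isChain_iff_getElem.2 ?_
    intro i hi
    have hi1 : i + 1 < (List.zipWith p γ η).length := by omega
    have hiγ : i + 1 < γ.length := by omega
    have hiη : i + 1 < η.length := by omega
    apply isStep_of_coords (hcoords i (by omega)) (by push_cast [hcoords (i+1) hi1]; ring)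
    rw [hget i (by omega), hget (i+1) hi1]
    exact hq _ _ _ _ (path_snd_step hγ i hiγ) (path_snd_step hη i hiη)

lemma meet_isPathTo {z : Site} {γ η : List Site} (hγ : IsPathTo z γ) (hη : IsPathTo z η) :
    IsPathTo z (List.zipWith pick γ η) := by
  refine zip_isPathTo hγ hη pick pick_or ?_ ?_
  · intro a b a' b' h1 h2
    rw [pick_snd, pick_snd]
    omega
  · intro a; unfold pick; split <;> rfl

lemma join_isPathTo {z : Site} {γ η : List Site} (hγ : IsPathTo z γ) (hη : IsPathTo z η) :
    IsPathTo z (List.zipWith pick' γ η) := by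
  refine zip_isPathTo hγ hη pick' pick'_or ?_ ?_
  · intro a b a' b' h1 h2
    rw [pick'_snd, pick'_snd]
    omega
  · intro a; unfold pick'; split <;> rfl

lemma plen_zip_add (f : Site → ℝ) :
    ∀ (γ η : List Site),
      plen f (List.zipWith pick γ η) + plen f (List.zipWith pick' γ η)
        = plen f (γ.take η.length) + plen f (η.take γ.length) := by
  intro γ
  induction γ with
  | nil => intro η; simp [plen]
  | cons a l ih =>
    intro η
    cases η with
    | nil => simp [plen]
    | cons b m =>
      have := ih m
      have hp := pick_add_pick' f a b
      simp only [List.zipWith_cons_cons, List.take_succ_cons, plen, List.map_cons,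
        List.sum_cons, List.length_cons] at *
      linarith

/-! ### Existence of paths, optimal paths, low-optimal paths -/

lemma path_append {z z' : Site} {γ : List Site} (h : IsPathTo z γ) (hs : IsStep z z') :
    IsPathTo z' (γ ++ [z']) := by
  refine ⟨?_, ?_, ?_⟩
  · rw [List.head?_append_of_ne_nil _ (path_ne_nil h)]
    exact h.1
  · exact List.getLast?_concat
  · refine List.isChain_append.2 ?_
    refine ⟨h.2.2, List.isChain_singleton _, ?_⟩
    intro x hx y hy
    rw [h.2.1, Option.mem_some_iff] at hx
    simp only [List.head?_cons, Option.mem_some_iff] at hy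
    rw [← hx, ← hy]
    exact hs

lemma exists_path : ∀ (n : ℕ) (z : Site), z ∈ posQuad → z.1 + z.2 = (n : ℤ) →
    ∃ γ, IsPathTo z γ := by
  intro n
  induction n with
  | zero =>
    intro z hz hsum
    have : z = ((0, 0) : Site) := Prod.ext (by have := hz.1; have := hz.2; omega)
      (by have := hz.1; have := hz.2; omega)
    subst this
    exact ⟨[(0, 0)], by simp [IsPathTo, List.Chain']⟩
  | succ n ih =>
    intro z hz hsum
    by_cases h1 : 0 < z.1
    · obtain ⟨γ, hγ⟩ := ih (z.1 - 1, z.2) ⟨by simp; omega, hz.2⟩ (by push_cast; push_cast at hsum; omega)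
      refine ⟨γ ++ [z], ?_⟩
      have : IsStep ((z.1 - 1, z.2) : Site) z := Or.inl (Prod.ext (by simp) (by simp))
      exact path_append hγ this
    · have h2 : 0 < z.2 := by have := hz.1; push_cast at hsum; omega
      obtain ⟨γ, hγ⟩ := ih (z.1, z.2 - 1) ⟨hz.1, by simp; omega⟩ (by push_cast at hsum ⊢; omega)
      refine ⟨γ ++ [z], ?_⟩
      have : IsStep ((z.1, z.2 - 1) : Site) z := Or.inr (Prod.ext (by simp) (by simp))
      exact path_append hγ this

lemma finite_paths (z : Site) : {γ : List Site | IsPathTo z γ}.Finite := by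
  set n := (z.1 + z.2).toNat with hn
  set F : List Site → (Fin (n + 1) → ℤ) := fun γ i => (γ.getD i (0, 0)).2 with hF
  have hsub : F '' {γ : List Site | IsPathTo z γ} ⊆
      Set.pi Set.univ (fun _ : Fin (n + 1) => Set.Icc (0 : ℤ) n) := by
    rintro - ⟨γ, hγ, rfl⟩
    intro i _
    have hlen : γ.length = n + 1 := path_length hγ
    have hi : (i : ℕ) < γ.length := by omega
    obtain ⟨-, h0, hle⟩ := path_coords hγ i hi
    simp only [hF, List.getD_eq_getElem _ _ hi, Set.mem_Icc]
    constructor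
    · exact h0
    · have : (i : ℕ) ≤ n := by omega
      calc (γ[(i : ℕ)]'hi).2 ≤ (i : ℤ) := hle
        _ ≤ (n : ℤ) := by exact_mod_cast this
  have hfin : (F '' {γ : List Site | IsPathTo z γ}).Finite :=
    Set.Finite.subset (Set.Finite.pi fun _ => Set.finite_Icc _ _) hsub
  refine Set.Finite.of_finite_image hfin ?_
  intro γ hγ γ' hγ' he
  refine path_eq_of_snd hγ hγ' ?_
  intro i hi hi'
  have hlγ : γ.length = n + 1 := path_length hγ
  have hI : i < n + 1 := by omega
  have := congrFun he (⟨i, hI⟩ : Fin (n + 1))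
  simpa only [hF, List.getD_eq_getElem _ _ hi, List.getD_eq_getElem _ _ hi'] using this

lemma exists_optimal (ω : Site → ℝ) (z : Site) (hz : z ∈ posQuad) :
    ∃ γ, IsOptimal ω z γ := by
  have hne : {γ : List Site | IsPathTo z γ}.Nonempty := by
    obtain ⟨γ, hγ⟩ := exists_path (z.1 + z.2).toNat z hz
      (by have := hz.1; have := hz.2; omega)
    exact ⟨γ, hγ⟩
  obtain ⟨γ, hγ, hmax⟩ := Set.exists_max_image _ (plen ω) (finite_paths z) hne
  exact ⟨γ, hγ, fun γ' hγ' => hmax γ' hγ'⟩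

lemma plen_zip_add' (f : Site → ℝ) {z : Site} {γ η : List Site}
    (hγ : IsPathTo z γ) (hη : IsPathTo z η) :
    plen f (List.zipWith pick γ η) + plen f (List.zipWith pick' γ η) = plen f γ + plen f η := by
  have hl : γ.length = η.length := by rw [path_length hγ, path_length hη]
  have := plen_zip_add f γ η
  rwa [← hl, List.take_length, hl, List.take_length] at this

lemma meet_optimal {ω : Site → ℝ} {z : Site} {γ η : List Site}
    (hγ : IsOptimal ω z γ) (hη : IsOptimal ω z η) :
    IsOptimal ω z (List.zipWith pick γ η) := by
  have hm := meet_isPathTo hγ.1 hη.1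
  have hj := join_isPathTo hγ.1 hη.1
  have hsum := plen_zip_add' ω hγ.1 hη.1
  have h1 : plen ω (List.zipWith pick γ η) ≤ plen ω γ := hγ.2 _ hm
  have h2 : plen ω (List.zipWith pick' γ η) ≤ plen ω γ := hγ.2 _ hj
  have h3 : plen ω γ ≤ plen ω η := hη.2 _ hγ.1
  have h4 : plen ω η ≤ plen ω γ := hγ.2 _ hη.1
  refine ⟨hm, fun γ' hγ' => ?_⟩
  have := hγ.2 γ' hγ'
  linarith

lemma exists_lowOpt (ω : Site → ℝ) (z : Site) (hz : z ∈ posQuad) :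
    ∃ γ, IsLowOptimal ω z γ := by
  have hOfin : {γ : List Site | IsOptimal ω z γ}.Finite :=
    Set.Finite.subset (finite_paths z) fun γ hγ => hγ.1
  have hOne : {γ : List Site | IsOptimal ω z γ}.Nonempty := exists_optimal ω z hz
  set f : Site → ℝ := fun s => (s.2 : ℝ) with hf
  obtain ⟨m, hm, hmin⟩ := Set.exists_min_image _ (plen f) hOfin hOne
  refine ⟨m, hm, ?_⟩
  intro γ' hγ'
  have hμ : IsOptimal ω z (List.zipWith pick m γ') := meet_optimal hm hγ'
  have hlm : m.length = (z.1 + z.2).toNat + 1 := path_length hm.1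
  have hlγ' : γ'.length = (z.1 + z.2).toNat + 1 := path_length hγ'.1
  have hlμ : (List.zipWith pick m γ').length = m.length := by
    rw [List.length_zipWith]; omega
  have hle : ∀ (i : ℕ) (hi : i < (List.zipWith pick m γ').length) (hi' : i < m.length),
      f ((List.zipWith pick m γ')[i]'hi) ≤ f (m[i]'hi') := by
    intro i hi hi'
    rw [List.getElem_zipWith]
    simp only [hf]
    rw [Int.cast_le, pick_snd]
    omega
  intro i hi hi'
  simp only [List.get_eq_getElem]
  by_contra hlt
  push_neg at hlt
  have hstrict : plen f (List.zipWith pick m γ') < plen f m := by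
    refine plen_lt_of f hlμ hle ⟨i, by omega, hi, ?_⟩
    rw [List.getElem_zipWith]
    simp only [hf]
    rw [Int.cast_lt, pick_snd]
    omega
  have := hmin _ hμ
  linarith

lemma lowOpt_spec {ω : Site → ℝ} {z : Site} (h : ∃ γ, IsLowOptimal ω z γ) :
    IsLowOptimal ω z (lowOpt ω z) := by
  rw [lowOpt, dif_pos h]
  exact h.choose_spec

/-- If the low-optimal paths `γ_z^{ω+ε}` and `γ_z^ω` are distinct, then
`ε(γ_z^ω) < ε(γ_z^{ω+ε})`. -/
theorem eps_strict_inequality (ω ε : Site → ℝ) (hω : ∀ z : Site, 0 ≤ ω z)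
    (hωε : ∀ z : Site, 0 ≤ ω z + ε z) (z : Site) (hz : z ∈ posQuad)
    (hne : lowOpt (fun s => ω s + ε s) z ≠ lowOpt ω z) :
    plen ε (lowOpt ω z) < plen ε (lowOpt (fun s => ω s + ε s) z) := by
  have h1 := lowOpt_spec (exists_lowOpt ω z hz)
  have h2 := lowOpt_spec (exists_lowOpt (fun s => ω s + ε s) z hz)
  set γ := lowOpt ω z with hγdef
  set η := lowOpt (fun s => ω s + ε s) z with hηdef
  have hγpath : IsPathTo z γ := h1.1.1
  have hηpath : IsPathTo z η := h2.1.1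
  have hA : plen ω η ≤ plen ω γ := h1.1.2 η hηpath
  have hB : plen (fun s => ω s + ε s) γ ≤ plen (fun s => ω s + ε s) η := h2.1.2 γ hγpath
  rw [plen_add, plen_add] at hB
  by_contra hcon
  push_neg at hcon
  -- then plen ε η ≤ plen ε γ, and all inequalities are equalities
  have he1 : plen ε γ = plen ε η := by linarith
  have he2 : plen ω γ = plen ω η := by linarith
  -- γ is (ω+ε)-optimal
  have hγopt' : IsOptimal (fun s => ω s + ε s) z γ := by
    refine ⟨hγpath, fun γ' hγ' => ?_⟩
    have := h2.1.2 γ' hγ'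
    rw [plen_add ω ε γ', plen_add ω ε η] at this
    rw [plen_add ω ε γ', plen_add ω ε γ]
    linarith
  -- η is ω-optimal
  have hηopt : IsOptimal ω z η := ⟨hηpath, fun γ' hγ' => by have := h1.1.2 γ' hγ'; linarith⟩
  have hb1 : Below η γ := h2.2 γ hγopt'
  have hb2 : Below γ η := h1.2 η hηopt
  exact hne (below_antisymm hηpath hγpath hb1 hb2)
end

section
/- Let ω ∈ Ω and a ∈ ℤ₊², and define the configuration ω^a by: ω^a(0,0) = ω(γ_a^ω); ω^a(x,0) = ω(γ_{a+(x,0)}^ω) − ω(γ_{a+(x−1,0)}^ω) for x ≥ 1; ω^a(0,y) = ω(γ_{a+(0,y)}^ω) − ω(γ_{a+(0,y−1)}^ω) for y ≥ 1; and ω^a(z) = ω(a+z) otherwise. Then ω^a is a configuration (all values are nonnegative), ω^a(γ_z^{ω^a}) = ω(γ_{a+z}^ω) for every z ∈ ℤ₊², and V(T_{(1,1)}^{ω^a}) = V(T_{a+(1,1)}^ω) − a. -/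
open scoped NNReal

namespace Aux

lemma step_cases {u v : Site} (h : IsStep u v) :
    (v.1 = u.1 + 1 ∧ v.2 = u.2) ∨ (v.1 = u.1 ∧ v.2 = u.2 + 1) := by
  rcases h with h | h <;> subst h <;> simp [Prod.ext_iff]

lemma path_ne_nil {z : Site} {γ : List Site} (h : IsPathTo z γ) : γ ≠ [] := by
  intro e; subst e; simp [IsPathTo] at h

lemma path_singleton {z w : Site} (h : IsPathTo z [w]) : w = (0,0) ∧ z = (0,0) := by
  obtain ⟨h1, h2, -⟩ := h
  simp [List.head?] at h1
  simp [List.getLast?] at h2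
  exact ⟨by simpa using h1, by simp [← h2, h1]⟩

lemma path_append {w z : Site} {γ : List Site} (h : IsPathTo w γ) (hs : IsStep w z) :
    IsPathTo z (γ ++ [z]) := by
  obtain ⟨h1, h2, h3⟩ := h
  refine ⟨?_, ?_, ?_⟩
  · rcases γ with _ | ⟨b, l⟩
    · simp at h1
    · simpa using h1
  · simp
  · rw [List.Chain', List.isChain_append]
    refine ⟨h3, List.isChain_singleton _, ?_⟩
    intro x hx y hy
    simp at hy
    subst hy
    rw [h2] at hx
    simp at hx
    subst hx
    exact hs

lemma path_decomp {z : Site} {γ : List Site} (h : IsPathTo z γ) (hl : 2 ≤ γ.length) :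
    ∃ δ w, γ = δ ++ [z] ∧ IsPathTo w δ ∧ IsStep w z := by
  obtain ⟨h1, h2, h3⟩ := h
  have hne : γ ≠ [] := by intro e; subst e; simp at hl
  have hd : γ.dropLast ≠ [] := by
    intro e
    have := γ.length_dropLast
    rw [e] at this
    simp at this
    omega
  have hlast : γ.getLast hne = z := by
    rwa [List.getLast?_eq_getLast (l := γ) hne, Option.some_inj] at h2
  have hγ : γ.dropLast ++ [z] = γ := by
    rw [← hlast]; exact List.dropLast_append_getLast hne
  set δ := γ.dropLast with hδ
  refine ⟨δ, δ.getLast hd, hγ.symm, ⟨?_, ?_, ?_⟩, ?_⟩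
  · rw [← hγ] at h1
    rcases δ with _ | ⟨b, l⟩
    · exact absurd rfl hd
    · simpa using h1
  · rw [List.getLast?_eq_getLast (l := δ) hd]
  · rw [← hγ, List.Chain', List.isChain_append] at h3
    exact h3.1
  · rw [← hγ, List.Chain', List.isChain_append] at h3
    have := h3.2.2 (δ.getLast hd) (by simp [List.getLast?_eq_getLast (l := δ) hd]) z (by simp)
    exact this

lemma plen_append (ω : Site → ℝ) (γ : List Site) (z : Site) :
    plen ω (γ ++ [z]) = plen ω γ + ω z := by
  simp [plen]


lemma path_last_mem {z : Site} {γ : List Site} (h : IsPathTo z γ) : z ∈ γ := by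
  have hne := path_ne_nil h
  have : γ.getLast hne = z := by
    have h2 := h.2.1
    rwa [List.getLast?_eq_getLast (l := γ) hne, Option.some_inj] at h2
  rw [← this]
  exact List.getLast_mem hne

lemma path_concat_decomp {z : Site} {l : List Site} (hl : l ≠ []) (h : IsPathTo z (l ++ [z])) :
    IsPathTo (l.getLast hl) l ∧ IsStep (l.getLast hl) z := by
  obtain ⟨h1, h2, h3⟩ := h
  rw [List.Chain', List.isChain_append] at h3
  refine ⟨⟨?_, ?_, h3.1⟩, ?_⟩
  · rcases l with _ | ⟨c, l'⟩
    · exact absurd rfl hl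
    · simpa using h1
  · rw [List.getLast?_eq_getLast (l := l) hl]
  · exact h3.2.2 (l.getLast hl) (by simp [List.getLast?_eq_getLast (l := l) hl]) z (by simp)

lemma path_props : ∀ (γ : List Site) (z : Site), IsPathTo z γ →
    ((γ.length : ℤ) = z.1 + z.2 + 1) ∧
    (∀ w ∈ γ, 0 ≤ w.1 ∧ 0 ≤ w.2 ∧ w.1 ≤ z.1 ∧ w.2 ≤ z.2) ∧
    (∀ i (hi : i < γ.length), ((γ.get ⟨i,hi⟩).1 + (γ.get ⟨i,hi⟩).2 : ℤ) = i) := by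
  intro γ
  induction γ using List.reverseRecOn with
  | nil => intro z h; exact absurd rfl (path_ne_nil h)
  | append_singleton l b ih =>
    intro z h
    have hb : b = z := by
      have h2 := h.2.1
      rwa [List.getLast?_concat, Option.some_inj] at h2
    have hb' : z = b := hb.symm
    subst hb'
    rcases eq_or_ne l [] with rfl | hl
    · obtain ⟨h1, h2⟩ := path_singleton (by simpa using h)
      refine ⟨by simp [h2], ?_, ?_⟩
      · intro w hw
        simp at hw
        subst hw
        simp [h2]
      · intro i hi
        simp at hi
        subst hi
        simp [h2]
    · obtain ⟨hp, hs⟩ := path_concat_decomp hl h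
      set w := l.getLast hl with hwdef
      obtain ⟨ih1, ih2, ih3⟩ := ih w hp
      have hwz : (z.1 = w.1 + 1 ∧ z.2 = w.2) ∨ (z.1 = w.1 ∧ z.2 = w.2 + 1) := step_cases hs
      have hwb := ih2 w (List.getLast_mem hl)
      refine ⟨?_, ?_, ?_⟩
      · simp only [List.length_append, List.length_singleton]
        push_cast
        omega
      · intro w' hw'
        rw [List.mem_append] at hw'
        rcases hw' with hw' | hw'
        · have := ih2 w' hw'
          omega
        · simp at hw'
          subst hw'
          omega
      · intro i hi
        have hi2 : i < l.length + 1 := by simpa using hi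
        rcases Nat.lt_or_ge i l.length with hil | hil
        · have : ((l ++ [z]).get ⟨i, hi⟩) = l.get ⟨i, hil⟩ := by
            simp [List.get_eq_getElem, List.getElem_append_left hil]
          rw [this]
          exact ih3 i hil
        · have hie : i = l.length := by omega
          subst hie
          have : ((l ++ [z]).get ⟨l.length, hi⟩) = z := by
            simp [List.get_eq_getElem]
          rw [this]
          have hlen : (l.length : ℤ) = w.1 + w.2 + 1 := ih1
          omega


lemma step_pred {w z : Site} (hs : IsStep w z) : w = z - (1,0) ∨ w = z - (0,1) := by
  rcases hs with h | h <;> subst h <;> simp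

lemma path_end_nonneg {z : Site} {γ : List Site} (h : IsPathTo z γ) : 0 ≤ z.1 ∧ 0 ≤ z.2 := by
  have := (path_props γ z h).2.1 z (path_last_mem h)
  exact ⟨this.1, this.2.1⟩

noncomputable def G (ω : Site → ℝ) (z : Site) : ℝ :=
  if z.1 ≤ 0 ∧ z.2 ≤ 0 then ω z
  else if 1 ≤ z.2 ∧ z.1 ≤ 0 then G ω (z - (0,1)) + ω z
  else if 1 ≤ z.1 ∧ z.2 ≤ 0 then G ω (z - (1,0)) + ω z
  else max (G ω (z - (1,0))) (G ω (z - (0,1))) + ω z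
termination_by z.1.toNat + z.2.toNat
decreasing_by all_goals (simp only [Prod.fst_sub, Prod.snd_sub]; norm_num; omega)

open Classical in
noncomputable def lop (ω : Site → ℝ) (z : Site) : List Site :=
  if z.1 ≤ 0 ∧ z.2 ≤ 0 then [z]
  else if 1 ≤ z.2 ∧ z.1 ≤ 0 then lop ω (z - (0,1)) ++ [z]
  else if 1 ≤ z.1 ∧ z.2 ≤ 0 then lop ω (z - (1,0)) ++ [z]
  else if G ω (z - (1,0)) ≤ G ω (z - (0,1)) then lop ω (z - (0,1)) ++ [z]
  else lop ω (z - (1,0)) ++ [z]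
termination_by z.1.toNat + z.2.toNat
decreasing_by all_goals (simp only [Prod.fst_sub, Prod.snd_sub]; norm_num; omega)

variable {ω : Site → ℝ} {z : Site}

lemma G_zero (ω : Site → ℝ) (h1 : z.1 ≤ 0) (h2 : z.2 ≤ 0) : G ω z = ω z := by
  rw [G, if_pos ⟨h1, h2⟩]

lemma G_yaxis (ω : Site → ℝ) (h1 : z.1 ≤ 0) (h2 : 1 ≤ z.2) :
    G ω z = G ω (z - (0,1)) + ω z := by
  rw [G, if_neg (by omega), if_pos ⟨h2, h1⟩]

lemma G_xaxis (ω : Site → ℝ) (h1 : 1 ≤ z.1) (h2 : z.2 ≤ 0) :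
    G ω z = G ω (z - (1,0)) + ω z := by
  rw [G, if_neg (by omega), if_neg (by omega), if_pos ⟨h1, h2⟩]

lemma G_int (ω : Site → ℝ) (h1 : 1 ≤ z.1) (h2 : 1 ≤ z.2) :
    G ω z = max (G ω (z - (1,0))) (G ω (z - (0,1))) + ω z := by
  rw [G, if_neg (by omega), if_neg (by omega), if_neg (by omega)]

lemma lop_zero (ω : Site → ℝ) (h1 : z.1 ≤ 0) (h2 : z.2 ≤ 0) : lop ω z = [z] := by
  rw [lop, if_pos ⟨h1, h2⟩]

lemma lop_yaxis (ω : Site → ℝ) (h1 : z.1 ≤ 0) (h2 : 1 ≤ z.2) :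
    lop ω z = lop ω (z - (0,1)) ++ [z] := by
  rw [lop, if_neg (by omega), if_pos ⟨h2, h1⟩]

lemma lop_xaxis (ω : Site → ℝ) (h1 : 1 ≤ z.1) (h2 : z.2 ≤ 0) :
    lop ω z = lop ω (z - (1,0)) ++ [z] := by
  rw [lop, if_neg (by omega), if_neg (by omega), if_pos ⟨h1, h2⟩]

lemma lop_int_low (ω : Site → ℝ) (h1 : 1 ≤ z.1) (h2 : 1 ≤ z.2)
    (hG : G ω (z - (1,0)) ≤ G ω (z - (0,1))) :
    lop ω z = lop ω (z - (0,1)) ++ [z] := by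
  rw [lop, if_neg (by omega), if_neg (by omega), if_neg (by omega), if_pos hG]

lemma lop_int_high (ω : Site → ℝ) (h1 : 1 ≤ z.1) (h2 : 1 ≤ z.2)
    (hG : ¬ G ω (z - (1,0)) ≤ G ω (z - (0,1))) :
    lop ω z = lop ω (z - (1,0)) ++ [z] := by
  rw [lop, if_neg (by omega), if_neg (by omega), if_neg (by omega), if_neg hG]

lemma sub01_fst (z : Site) : (z - (0,1)).1 = z.1 := by simp
lemma sub01_snd (z : Site) : (z - (0,1)).2 = z.2 - 1 := by simp
lemma sub10_fst (z : Site) : (z - (1,0)).1 = z.1 - 1 := by simp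
lemma sub10_snd (z : Site) : (z - (1,0)).2 = z.2 := by simp

lemma step_sub10 (z : Site) : IsStep (z - (1,0)) z := Or.inl (by simp)
lemma step_sub01 (z : Site) : IsStep (z - (0,1)) z := Or.inr (by simp)

lemma lop_main (ω : Site → ℝ) : ∀ n : ℕ, ∀ z : Site, 0 ≤ z.1 → 0 ≤ z.2 →
    (z.1 + z.2).toNat = n → IsPathTo z (lop ω z) ∧ plen ω (lop ω z) = G ω z := by
  intro n
  induction n using Nat.strong_induction_on with
  | _ n ih =>
    intro z hz1 hz2 hn
    rcases le_or_gt z.1 0 with h1 | h1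
    · rcases le_or_gt z.2 0 with h2 | h2
      · -- z = (0,0)
        have hz : z = (0,0) := Prod.ext (by omega) (by omega)
        rw [lop_zero ω h1 h2, G_zero ω h1 h2]
        refine ⟨⟨?_, ?_, ?_⟩, ?_⟩
        · simp [hz]
        · simp
        · exact List.isChain_singleton _
        · simp [plen]
      · -- y-axis
        have hp := ih ((z - (0,1)).1 + (z - (0,1)).2).toNat (by simp; omega)
          (z - (0,1)) (by simp; omega) (by simp; omega) rfl
        rw [lop_yaxis ω h1 h2, G_yaxis ω h1 h2, plen_append, hp.2]
        exact ⟨path_append hp.1 (step_sub01 z), rfl⟩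
    · rcases le_or_gt z.2 0 with h2 | h2
      · have hp := ih ((z - (1,0)).1 + (z - (1,0)).2).toNat (by simp; omega)
          (z - (1,0)) (by simp; omega) (by simp; omega) rfl
        rw [lop_xaxis ω h1 h2, G_xaxis ω h1 h2, plen_append, hp.2]
        exact ⟨path_append hp.1 (step_sub10 z), rfl⟩
      · have hpl := ih ((z - (1,0)).1 + (z - (1,0)).2).toNat (by simp; omega)
          (z - (1,0)) (by simp; omega) (by simp; omega) rfl
        have hpd := ih ((z - (0,1)).1 + (z - (0,1)).2).toNat (by simp; omega)
          (z - (0,1)) (by simp; omega) (by simp; omega) rfl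
        rw [G_int ω h1 h2]
        by_cases hG : G ω (z - (1,0)) ≤ G ω (z - (0,1))
        · rw [lop_int_low ω h1 h2 hG, plen_append, hpd.2, max_eq_right hG]
          exact ⟨path_append hpd.1 (step_sub01 z), rfl⟩
        · rw [lop_int_high ω h1 h2 hG, plen_append, hpl.2,
            max_eq_left (le_of_not_ge hG)]
          exact ⟨path_append hpl.1 (step_sub10 z), rfl⟩

lemma lop_isPath (ω : Site → ℝ) (hz1 : 0 ≤ z.1) (hz2 : 0 ≤ z.2) :
    IsPathTo z (lop ω z) :=
  (lop_main ω _ z hz1 hz2 rfl).1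

lemma lop_plen (ω : Site → ℝ) (hz1 : 0 ≤ z.1) (hz2 : 0 ≤ z.2) :
    plen ω (lop ω z) = G ω z :=
  (lop_main ω _ z hz1 hz2 rfl).2

lemma plen_le_G (ω : Site → ℝ) : ∀ n : ℕ, ∀ z : Site, 0 ≤ z.1 → 0 ≤ z.2 →
    (z.1 + z.2).toNat = n → ∀ γ, IsPathTo z γ → plen ω γ ≤ G ω z := by
  intro n
  induction n using Nat.strong_induction_on with
  | _ n ih =>
    intro z hz1 hz2 hn γ hγ
    have hprops := path_props γ z hγ
    rcases le_or_gt γ.length 1 with hl | hl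
    · -- single point, z = (0,0)
      have h1 : γ.length = 1 := by
        have := path_ne_nil hγ
        rcases γ with _ | ⟨b, l⟩
        · exact absurd rfl this
        · simp only [List.length_cons] at hl ⊢; omega
      obtain ⟨w, hw⟩ := List.length_eq_one_iff.mp h1
      subst hw
      obtain ⟨rfl, rfl⟩ := path_singleton hγ
      rw [G_zero ω (by norm_num) (by norm_num)]
      simp [plen]
    · obtain ⟨δ, w, rfl, hδ, hs⟩ := path_decomp hγ (by omega)
      have hw := path_end_nonneg hδ
      have hsc := step_cases hs
      have ihw := ih ((w.1 + w.2).toNat) (by omega) w hw.1 hw.2 rfl δ hδ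
      rw [plen_append]
      have hG : G ω w + ω z ≤ G ω z := by
        rcases step_pred hs with rfl | rfl
        · -- w = z - (1,0)
          rcases le_or_gt z.2 0 with h2 | h2
          · rw [G_xaxis ω (by have h := hw.1; simp at h; omega) h2]
          · rw [G_int ω (by have h := hw.1; simp at h; omega) h2]
            have := le_max_left (G ω (z - (1,0))) (G ω (z - (0,1)))
            linarith
        · -- w = z - (0,1)
          rcases le_or_gt z.1 0 with h1 | h1
          · rw [G_yaxis ω h1 (by have h := hw.2; simp at h; omega)]
          · rw [G_int ω h1 (by have h := hw.2; simp at h; omega)]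
            have := le_max_right (G ω (z - (1,0))) (G ω (z - (0,1)))
            linarith
      have : plen ω δ ≤ G ω w := ihw
      linarith


lemma below_append {γ γ' : List Site} {x y : Site} (h : Below γ γ')
    (hlen : γ.length = γ'.length) (hxy : x.2 ≤ y.2) : Below (γ ++ [x]) (γ' ++ [y]) := by
  intro i hi hi'
  have hi2 : i < γ.length + 1 := by simpa using hi
  rcases Nat.lt_or_ge i γ.length with hil | hil
  · have hil' : i < γ'.length := hlen ▸ hil
    have e1 : (γ ++ [x]).get ⟨i, hi⟩ = γ.get ⟨i, hil⟩ := by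
      simp [List.get_eq_getElem, List.getElem_append_left hil]
    have e2 : (γ' ++ [y]).get ⟨i, hi'⟩ = γ'.get ⟨i, hil'⟩ := by
      simp [List.get_eq_getElem, List.getElem_append_left hil']
    rw [e1, e2]
    exact h i hil hil'
  · have hie : i = γ.length := by omega
    subst hie
    have e1 : (γ ++ [x]).get ⟨γ.length, hi⟩ = x := by simp [List.get_eq_getElem]
    have e2 : (γ' ++ [y]).get ⟨γ.length, hi'⟩ = y := by
      simp [List.get_eq_getElem, hlen]
    rw [e1, e2]
    exact hxy

lemma prefix_optimal {w : Site} {γ : List Site} (hopt : IsOptimal ω z (γ ++ [z]))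
    (hγ : IsPathTo w γ) (hs : IsStep w z) : IsOptimal ω w γ := by
  refine ⟨hγ, ?_⟩
  intro δ hδ
  have := hopt.2 (δ ++ [z]) (path_append hδ hs)
  rw [plen_append, plen_append] at this
  linarith

lemma lop_below (ω : Site → ℝ) : ∀ n : ℕ, ∀ u v : Site, 0 ≤ u.1 → 0 ≤ u.2 → 0 ≤ v.1 → 0 ≤ v.2 →
    u.1 + u.2 = v.1 + v.2 → (u.1 + u.2).toNat = n → u.2 ≤ v.2 →
    ∀ γ', IsOptimal ω v γ' → Below (lop ω u) γ' := by
  intro n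
  induction n using Nat.strong_induction_on with
  | _ n ih =>
    intro u v hu1 hu2 hv1 hv2 hsum hn huv γ' hopt
    by_cases hu0 : u.1 ≤ 0 ∧ u.2 ≤ 0
    · -- u = v = (0,0)
      have hv0 : v = (0,0) := Prod.ext (by omega) (by omega)
      have hu0' : u = (0,0) := Prod.ext (by omega) (by omega)
      have hlen1 : γ'.length = 1 := by
        have := (path_props γ' v hopt.1).1
        rw [hv0] at this
        simp at this
        omega
      obtain ⟨w, rfl⟩ := List.length_eq_one_iff.mp hlen1
      obtain ⟨rfl, -⟩ := path_singleton hopt.1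
      rw [lop_zero ω hu0.1 hu0.2]
      intro i hi hi'
      simp at hi
      subst hi
      simp [hu0']
    · -- u ≠ (0,0); decompose γ'
      have hsum1 : 1 ≤ u.1 + u.2 := by omega
      have hlen2 : 2 ≤ γ'.length := by
        have := (path_props γ' v hopt.1).1
        omega
      obtain ⟨δ, q, rfl, hδ, hs⟩ := path_decomp hopt.1 hlen2
      have hq := path_end_nonneg hδ
      have δopt := prefix_optimal hopt hδ hs
      have hsq : q.1 + q.2 + 1 = v.1 + v.2 ∧ v.2 - 1 ≤ q.2 ∧ q.2 ≤ v.2 := by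
        rcases step_cases hs with h | h <;> omega
      have main : ∀ p : Site, 0 ≤ p.1 → 0 ≤ p.2 → p.1 + p.2 + 1 = u.1 + u.2 → p.2 ≤ q.2 →
          lop ω u = lop ω p ++ [u] → Below (lop ω u) (δ ++ [v]) := by
        intro p hp1 hp2 hpsum hpq hlop
        rw [hlop]
        have hb : Below (lop ω p) δ :=
          ih ((p.1 + p.2).toNat) (by omega) p q hp1 hp2 hq.1 hq.2 (by omega) rfl hpq δ δopt
        refine below_append hb ?_ huv
        have l1 := (path_props _ p (lop_isPath ω hp1 hp2)).1
        have l2 := (path_props δ q hδ).1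
        omega
      rcases le_or_gt u.1 0 with h1 | h1
      · exact main (u - (0,1)) (by simp; omega) (by simp; omega) (by simp; omega)
          (by simp; omega) (lop_yaxis ω h1 (by omega))
      · rcases le_or_gt u.2 0 with h2 | h2
        · exact main (u - (1,0)) (by simp; omega) (by simp; omega) (by simp; omega)
            (by simp; omega) (lop_xaxis ω h1 h2)
        · by_cases hG : G ω (u - (1,0)) ≤ G ω (u - (0,1))
          · exact main (u - (0,1)) (by simp; omega) (by simp; omega) (by simp; omega)
              (by simp; omega) (lop_int_low ω h1 h2 hG)
          · have hq2 : u.2 ≤ q.2 := by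
              rcases lt_or_eq_of_le huv with hlt | heq
              · omega
              · have huv' : u = v := Prod.ext (by omega) heq
                subst huv'
                rcases step_pred hs with hqe | hqe
                · rw [hqe]; simp
                · exfalso
                  subst hqe
                  have hub := plen_le_G ω _ (u - (0,1)) (by simp; omega) (by simp; omega)
                    rfl δ hδ
                  have h5 := hopt.2 (lop ω u) (lop_isPath ω (by omega) (by omega))
                  rw [lop_plen ω (by omega) (by omega), plen_append] at h5
                  have hGu : G ω u = max (G ω (u - (1,0))) (G ω (u - (0,1))) + ω u :=
                    G_int ω h1 h2
                  have hmax := le_max_left (G ω (u - (1,0))) (G ω (u - (0,1)))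
                  push_neg at hG
                  linarith
            exact main (u - (1,0)) (by simp; omega) (by simp; omega) (by simp; omega)
              (by simp; omega) (lop_int_high ω h1 h2 hG)

lemma low_optimal_lop (ω : Site → ℝ) (hz1 : 0 ≤ z.1) (hz2 : 0 ≤ z.2) :
    IsLowOptimal ω z (lop ω z) := by
  refine ⟨⟨lop_isPath ω hz1 hz2, ?_⟩, ?_⟩
  · intro γ' hγ'
    rw [lop_plen ω hz1 hz2]
    exact plen_le_G ω _ z hz1 hz2 rfl γ' hγ'
  · intro γ' hγ'
    exact lop_below ω _ z z hz1 hz2 hz1 hz2 rfl rfl le_rfl γ' hγ'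

lemma lowOptimal_unique {γ γ' : List Site} (h : IsLowOptimal ω z γ)
    (h' : IsLowOptimal ω z γ') : γ = γ' := by
  have hb := h.2 γ' h'.1
  have hb' := h'.2 γ h.1
  have hp := path_props γ z h.1.1
  have hp' := path_props γ' z h'.1.1
  have hlen : γ.length = γ'.length := by
    have := hp.1
    have := hp'.1
    omega
  apply List.ext_get hlen
  intro i hi hi'
  have e2 : (γ.get ⟨i, hi⟩).2 = (γ'.get ⟨i, hi'⟩).2 :=
    le_antisymm (hb i hi hi') (hb' i hi' hi)
  have s1 := hp.2.2 i hi
  have s2 := hp'.2.2 i hi'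
  exact Prod.ext (by omega) e2

lemma lowOpt_eq_lop (ω : Site → ℝ) (hz1 : 0 ≤ z.1) (hz2 : 0 ≤ z.2) :
    lowOpt ω z = lop ω z := by
  have hex : ∃ γ, IsLowOptimal ω z γ := ⟨lop ω z, low_optimal_lop ω hz1 hz2⟩
  rw [lowOpt, dif_pos hex]
  exact lowOptimal_unique hex.choose_spec (low_optimal_lop ω hz1 hz2)


lemma self_mem_lop (ω : Site → ℝ) (hz1 : 0 ≤ z.1) (hz2 : 0 ≤ z.2) : z ∈ lop ω z :=
  path_last_mem (lop_isPath ω hz1 hz2)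

lemma G_nonneg (ω : Site → ℝ) (hω : ∀ w : Site, 0 ≤ ω w) : ∀ n : ℕ, ∀ z : Site,
    0 ≤ z.1 → 0 ≤ z.2 → (z.1 + z.2).toNat = n → 0 ≤ G ω z := by
  intro n
  induction n using Nat.strong_induction_on with
  | _ n ih =>
    intro z hz1 hz2 hn
    rcases le_or_gt z.1 0 with h1 | h1
    · rcases le_or_gt z.2 0 with h2 | h2
      · rw [G_zero ω h1 h2]; exact hω z
      · rw [G_yaxis ω h1 h2]
        have := ih ((z - (0,1)).1 + (z - (0,1)).2).toNat (by simp; omega) (z - (0,1))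
          (by simp; omega) (by simp; omega) rfl
        linarith [hω z]
    · rcases le_or_gt z.2 0 with h2 | h2
      · rw [G_xaxis ω h1 h2]
        have := ih ((z - (1,0)).1 + (z - (1,0)).2).toNat (by simp; omega) (z - (1,0))
          (by simp; omega) (by simp; omega) rfl
        linarith [hω z]
      · rw [G_int ω h1 h2]
        have := ih ((z - (1,0)).1 + (z - (1,0)).2).toNat (by simp; omega) (z - (1,0))
          (by simp; omega) (by simp; omega) rfl
        have hm := le_max_left (G ω (z - (1,0))) (G ω (z - (0,1)))
        linarith [hω z]

lemma G_mono_x (ω : Site → ℝ) (hω : ∀ w : Site, 0 ≤ ω w) (z : Site) (hz1 : 0 ≤ z.1)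
    (hz2 : 0 ≤ z.2) : G ω z ≤ G ω (z + (1,0)) := by
  have e : z + (1,0) - (1,0) = z := add_sub_cancel_right z (1,0)
  rcases le_or_gt z.2 0 with h2 | h2
  · rw [G_xaxis ω (z := z + (1,0)) (by simp; omega) (by simp; omega), e]
    linarith [hω (z + (1,0))]
  · rw [G_int ω (z := z + (1,0)) (by simp; omega) (by simp; omega), e]
    have hm := le_max_left (G ω z) (G ω (z + (1,0) - (0,1)))
    linarith [hω (z + (1,0))]

lemma G_mono_y (ω : Site → ℝ) (hω : ∀ w : Site, 0 ≤ ω w) (z : Site) (hz1 : 0 ≤ z.1)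
    (hz2 : 0 ≤ z.2) : G ω z ≤ G ω (z + (0,1)) := by
  have e : z + (0,1) - (0,1) = z := add_sub_cancel_right z (0,1)
  rcases le_or_gt z.1 0 with h1 | h1
  · rw [G_yaxis ω (z := z + (0,1)) (by simp; omega) (by simp; omega), e]
    linarith [hω (z + (0,1))]
  · rw [G_int ω (z := z + (0,1)) (by simp; omega) (by simp; omega), e]
    have hm := le_max_right (G ω (z + (0,1) - (1,0))) (G ω z)
    linarith [hω (z + (0,1))]

lemma G_transl (ω ωa : Site → ℝ) (a : Site) (ha1 : 0 ≤ a.1) (ha2 : 0 ≤ a.2)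
    (h0 : ωa (0,0) = G ω a)
    (hx : ∀ x : ℤ, 1 ≤ x → ωa (x,0) = G ω (a + (x,0)) - G ω (a + (x-1,0)))
    (hy : ∀ y : ℤ, 1 ≤ y → ωa (0,y) = G ω (a + (0,y)) - G ω (a + (0,y-1)))
    (hoth : ∀ z : Site, z ≠ (0, 0) → ¬(z.2 = 0 ∧ 1 ≤ z.1) → ¬(z.1 = 0 ∧ 1 ≤ z.2) →
      ωa z = ω (a + z)) :
    ∀ n : ℕ, ∀ z : Site, 0 ≤ z.1 → 0 ≤ z.2 → (z.1 + z.2).toNat = n →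
      G ωa z = G ω (a + z) := by
  intro n
  induction n using Nat.strong_induction_on with
  | _ n ih =>
    intro z hz1 hz2 hn
    rcases le_or_gt z.1 0 with h1 | h1
    · rcases le_or_gt z.2 0 with h2 | h2
      · have hz : z = (0,0) := Prod.ext (by omega) (by omega)
        rw [G_zero ωa h1 h2, hz, h0]
        congr 1
        simp
      · -- z = (0, z.2), z.2 ≥ 1
        have hz : z = (0, z.2) := Prod.ext (by omega) rfl
        have ihp := ih ((z - (0,1)).1 + (z - (0,1)).2).toNat (by simp; omega) (z - (0,1))
          (by simp; omega) (by simp; omega) rfl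
        have e1 : a + (z - (0,1)) = a + (0, z.2 - 1) := by
          apply Prod.ext <;> simp <;> omega
        have e2 : a + (0, z.2) = a + z := by
          apply Prod.ext <;> simp <;> omega
        rw [G_yaxis ωa h1 h2, ihp, e1]
        nth_rewrite 2 [hz]
        rw [hy z.2 h2, e2]
        ring
    · rcases le_or_gt z.2 0 with h2 | h2
      · have hz : z = (z.1, 0) := Prod.ext rfl (by omega)
        have ihp := ih ((z - (1,0)).1 + (z - (1,0)).2).toNat (by simp; omega) (z - (1,0))
          (by simp; omega) (by simp; omega) rfl
        have e1 : a + (z - (1,0)) = a + (z.1 - 1, 0) := by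
          apply Prod.ext <;> simp <;> omega
        have e2 : a + (z.1, 0) = a + z := by
          apply Prod.ext <;> simp <;> omega
        rw [G_xaxis ωa h1 h2, ihp, e1]
        nth_rewrite 2 [hz]
        rw [hx z.1 h1, e2]
        ring
      · -- interior
        have hz00 : z ≠ (0,0) := by
          intro e
          rw [e] at h1
          simp at h1
        have ihl := ih ((z - (1,0)).1 + (z - (1,0)).2).toNat (by simp; omega) (z - (1,0))
          (by simp; omega) (by simp; omega) rfl
        have ihd := ih ((z - (0,1)).1 + (z - (0,1)).2).toNat (by simp; omega) (z - (0,1))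
          (by simp; omega) (by simp; omega) rfl
        have eo : ωa z = ω (a + z) :=
          hoth z hz00 (by intro h; omega) (by intro h; omega)
        rw [G_int ωa h1 h2, ihl, ihd, eo,
          G_int ω (z := a + z) (by simp; omega) (by simp; omega),
          add_sub_assoc, add_sub_assoc]

lemma mem_transl (ω ωa : Site → ℝ) (a : Site) (ha1 : 0 ≤ a.1) (ha2 : 0 ≤ a.2)
    (hT : ∀ z : Site, 0 ≤ z.1 → 0 ≤ z.2 → G ωa z = G ω (a + z)) :
    ∀ n : ℕ, ∀ z : Site, 1 ≤ z.1 → 1 ≤ z.2 → (z.1 + z.2).toNat = n →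
      (((1,1) : Site) ∈ lop ωa z ↔ a + (1,1) ∈ lop ω (a + z)) := by
  intro n
  induction n using Nat.strong_induction_on with
  | _ n ih =>
    intro z hz1 hz2 hn
    by_cases hz : z = ((1,1) : Site)
    · subst hz
      exact iff_of_true (self_mem_lop ωa (by norm_num) (by norm_num))
        (self_mem_lop ω (z := a + (1,1)) (by simp; omega) (by simp; omega))
    · have h3 : 3 ≤ z.1 + z.2 := by
        by_contra hc
        push_neg at hc
        exact hz (Prod.ext (by omega) (by omega))
      have hne1 : ¬(((1,1) : Site) = z) := fun e => hz e.symm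
      have hne2 : ¬(a + (1,1) = a + z) := fun e => hz (add_left_cancel e).symm
      have hTcomp : (G ωa (z - (1,0)) ≤ G ωa (z - (0,1))) ↔
          (G ω (a + z - (1,0)) ≤ G ω (a + z - (0,1))) := by
        rw [hT (z - (1,0)) (by simp; omega) (by simp; omega),
          hT (z - (0,1)) (by simp; omega) (by simp; omega),
          add_sub_assoc, add_sub_assoc]
      by_cases hG : G ωa (z - (1,0)) ≤ G ωa (z - (0,1))
      · rw [lop_int_low ωa hz1 hz2 hG,
          lop_int_low ω (z := a + z) (by simp; omega) (by simp; omega) (hTcomp.mp hG),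
          add_sub_assoc]
        simp only [List.mem_append, List.mem_singleton, hne1, hne2, or_false]
        rcases le_or_gt z.2 1 with hz21 | hz21
        · -- z.2 = 1 : both sides false
          have m1 : ((1,1) : Site) ∉ lop ωa (z - (0,1)) := by
            intro hm
            have := (path_props _ _ (lop_isPath ωa (z := z - (0,1))
              (by simp; omega) (by simp; omega))).2.1 (1,1) hm
            simp at this
            omega
          have m2 : a + (1,1) ∉ lop ω (a + (z - (0,1))) := by
            intro hm
            have := (path_props _ _ (lop_isPath ω (z := a + (z - (0,1)))
              (by simp; omega) (by simp; omega))).2.1 (a + (1,1)) hm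
            simp at this
            omega
          exact iff_of_false m1 m2
        · exact ih (((z - (0,1)).1 + (z - (0,1)).2).toNat) (by simp; omega) (z - (0,1))
            (by simp; omega) (by simp; omega) rfl
      · rw [lop_int_high ωa hz1 hz2 hG,
          lop_int_high ω (z := a + z) (by simp; omega) (by simp; omega)
            (fun hc => hG (hTcomp.mpr hc)),
          add_sub_assoc]
        simp only [List.mem_append, List.mem_singleton, hne1, hne2, or_false]
        rcases le_or_gt z.1 1 with hz11 | hz11
        · have m1 : ((1,1) : Site) ∉ lop ωa (z - (1,0)) := by
            intro hm
            have := (path_props _ _ (lop_isPath ωa (z := z - (1,0))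
              (by simp; omega) (by simp; omega))).2.1 (1,1) hm
            simp at this
            omega
          have m2 : a + (1,1) ∉ lop ω (a + (z - (1,0))) := by
            intro hm
            have := (path_props _ _ (lop_isPath ω (z := a + (z - (1,0)))
              (by simp; omega) (by simp; omega))).2.1 (a + (1,1)) hm
            simp at this
            omega
          exact iff_of_false m1 m2
        · exact ih (((z - (1,0)).1 + (z - (1,0)).2).toNat) (by simp; omega) (z - (1,0))
            (by simp; omega) (by simp; omega) rfl

end Aux

/-- Step II of the proof of Theorem 2: the configuration `ω^a` is nonnegative,
satisfies `ω^a(γ_z^{ω^a}) = ω(γ_{a+z}^ω)` for all `z ∈ ℤ₊²`, and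
`V(T_{(1,1)}^{ω^a}) = V(T_{a+(1,1)}^ω) − a`. -/
theorem translated_configuration (ω : Site → ℝ) (hω : ∀ z : Site, 0 ≤ ω z)
    (a : Site) (ha : a ∈ posQuad) (ωa : Site → ℝ)
    (h0 : ωa (0, 0) = plen ω (lowOpt ω a))
    (hx : ∀ x : ℤ, 1 ≤ x →
      ωa (x, 0) = plen ω (lowOpt ω (a + (x, 0))) - plen ω (lowOpt ω (a + (x - 1, 0))))
    (hy : ∀ y : ℤ, 1 ≤ y →
      ωa (0, y) = plen ω (lowOpt ω (a + (0, y))) - plen ω (lowOpt ω (a + (0, y - 1))))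
    (hoth : ∀ z : Site, z ≠ (0, 0) → ¬(z.2 = 0 ∧ 1 ≤ z.1) → ¬(z.1 = 0 ∧ 1 ≤ z.2) →
      ωa z = ω (a + z)) :
    (∀ z : Site, 0 ≤ ωa z) ∧
    (∀ z ∈ posQuad, plen ωa (lowOpt ωa z) = plen ω (lowOpt ω (a + z))) ∧
    treeV ωa (1, 1) = (· - a) '' treeV ω (a + (1, 1)) := by
  obtain ⟨ha1, ha2⟩ := ha
  have h0' : ωa (0, 0) = Aux.G ω a := by
    rw [h0, Aux.lowOpt_eq_lop (z := a) ω ha1 ha2, Aux.lop_plen ω ha1 ha2]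
  have hx' : ∀ x : ℤ, 1 ≤ x → ωa (x, 0) = Aux.G ω (a + (x, 0)) - Aux.G ω (a + (x - 1, 0)) := by
    intro x h1
    rw [hx x h1,
      Aux.lowOpt_eq_lop (z := a + (x, 0)) ω (by simp; omega) (by simp; omega),
      Aux.lop_plen (z := a + (x, 0)) ω (by simp; omega) (by simp; omega),
      Aux.lowOpt_eq_lop (z := a + (x - 1, 0)) ω (by simp; omega) (by simp; omega),
      Aux.lop_plen (z := a + (x - 1, 0)) ω (by simp; omega) (by simp; omega)]
  have hy' : ∀ y : ℤ, 1 ≤ y → ωa (0, y) = Aux.G ω (a + (0, y)) - Aux.G ω (a + (0, y - 1)) := by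
    intro y h1
    rw [hy y h1,
      Aux.lowOpt_eq_lop (z := a + (0, y)) ω (by simp; omega) (by simp; omega),
      Aux.lop_plen (z := a + (0, y)) ω (by simp; omega) (by simp; omega),
      Aux.lowOpt_eq_lop (z := a + (0, y - 1)) ω (by simp; omega) (by simp; omega),
      Aux.lop_plen (z := a + (0, y - 1)) ω (by simp; omega) (by simp; omega)]
  have hT : ∀ z : Site, 0 ≤ z.1 → 0 ≤ z.2 → Aux.G ωa z = Aux.G ω (a + z) := fun z hz1 hz2 =>
    Aux.G_transl ω ωa a ha1 ha2 h0' hx' hy' hoth _ z hz1 hz2 rfl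
  refine ⟨?_, ?_, ?_⟩
  · -- nonnegativity
    intro z
    by_cases hz0 : z = ((0, 0) : Site)
    · rw [hz0, h0']
      exact Aux.G_nonneg ω hω _ a ha1 ha2 rfl
    · by_cases hzx : z.2 = 0 ∧ 1 ≤ z.1
      · have hze : z = (z.1, 0) := Prod.ext rfl hzx.1
        rw [hze, hx' z.1 hzx.2]
        have hm := Aux.G_mono_x ω hω (a + (z.1 - 1, 0)) (by simp; omega) (by simp; omega)
        have e : a + (z.1 - 1, 0) + (1, 0) = a + (z.1, 0) := by
          apply Prod.ext <;> simp <;> omega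
        rw [e] at hm
        linarith
      · by_cases hzy : z.1 = 0 ∧ 1 ≤ z.2
        · have hze : z = (0, z.2) := Prod.ext hzy.1 rfl
          rw [hze, hy' z.2 hzy.2]
          have hm := Aux.G_mono_y ω hω (a + (0, z.2 - 1)) (by simp; omega) (by simp; omega)
          have e : a + (0, z.2 - 1) + (0, 1) = a + (0, z.2) := by
            apply Prod.ext <;> simp <;> omega
          rw [e] at hm
          linarith
        · rw [hoth z hz0 hzx hzy]
          exact hω _
  · -- optimal path lengths
    intro z hz
    obtain ⟨hz1, hz2⟩ := hz
    rw [Aux.lowOpt_eq_lop (z := z) ωa hz1 hz2, Aux.lop_plen (z := z) ωa hz1 hz2,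
      Aux.lowOpt_eq_lop (z := a + z) ω (by simp; omega) (by simp; omega),
      Aux.lop_plen (z := a + z) ω (by simp; omega) (by simp; omega)]
    exact hT z hz1 hz2
  · -- the subtree
    ext z'
    simp only [treeV, posQuad, Set.mem_setOf_eq, Set.mem_image]
    constructor
    · rintro ⟨⟨hz1, hz2⟩, hm⟩
      rw [Aux.lowOpt_eq_lop (z := z') ωa hz1 hz2] at hm
      have hb := (Aux.path_props _ _ (Aux.lop_isPath ωa hz1 hz2)).2.1 (1, 1) hm
      simp at hb
      refine ⟨a + z', ⟨⟨?_, ?_⟩, ?_⟩, ?_⟩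
      · simp; omega
      · simp; omega
      · rw [Aux.lowOpt_eq_lop (z := a + z') ω (by simp; omega) (by simp; omega)]
        exact (Aux.mem_transl ω ωa a ha1 ha2 hT _ z' (by omega) (by omega) rfl).mp hm
      · exact add_sub_cancel_left a z'
    · rintro ⟨w, ⟨⟨hw1, hw2⟩, hm⟩, hwz⟩
      have hw : w = a + z' := by
        rw [← hwz]
        abel
      subst hw
      simp only [Prod.fst_add, Prod.snd_add] at hw1 hw2
      rw [Aux.lowOpt_eq_lop (z := a + z') ω (by simp; omega) (by simp; omega)] at hm
      have hb := (Aux.path_props _ _ (Aux.lop_isPath ω (z := a + z')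
        (by simp; omega) (by simp; omega))).2.1 (a + (1, 1)) hm
      simp at hb
      have hz1 : 1 ≤ z'.1 := by omega
      have hz2 : 1 ≤ z'.2 := by omega
      refine ⟨⟨by omega, by omega⟩, ?_⟩
      rw [Aux.lowOpt_eq_lop (z := z') ωa (by omega) (by omega)]
      exact (Aux.mem_transl ω ωa a ha1 ha2 hT _ z' hz1 hz2 rfl).mpr hm
end
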